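/- arXiv:1007.5435 — 9 statements merged into one kernel-verified Lean document; each statement's English description precedes it below -/
import Mathlib

section
/- If (ρ,s) is an order-source pair for the SRM {g_α} and (s,ρ) is a weak source-order pair for {g_α}, then (s,ρ) is a strong source-order pair for {g_α}, i.e. limsup_{α→0⁺} s(λ)|r_α(λ)|/ρ(α) > 0 for every λ>0. -/
open Filter Topology Set

/-- A spectral regularization method `{g_α}_{α ∈ (0,α₀)}`:
`|λ g_α(λ)| ≤ C` uniformly (H2) and `g_α(λ) → 1/λ` as `α → 0⁺` for each `λ > 0` (H3). -/
structure SRM where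
  α₀ : ℝ
  hα₀ : 0 < α₀
  g : ℝ → ℝ → ℝ
  C : ℝ
  hC : 0 < C
  bound : ∀ α ∈ Ioo (0:ℝ) α₀, ∀ l : ℝ, 0 ≤ l → |l * g α l| ≤ C
  tendsto_inv : ∀ l : ℝ, 0 < l → Tendsto (fun α => g α l) (𝓝[>] 0) (𝓝 (1 / l))

namespace SRM
/-- `r_α(λ) = 1 - λ g_α(λ)`. -/
def r (G : SRM) (α l : ℝ) : ℝ := 1 - l * G.g α l
end SRM

/-- The class `𝒪` of nondecreasing positive functions with `ρ(α) → 0` as `α → 0⁺`. -/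
def memO (ρ : ℝ → ℝ) : Prop :=
  (∀ a, 0 < a → 0 < ρ a) ∧ MonotoneOn ρ (Ioi (0:ℝ)) ∧ Tendsto ρ (𝓝[>] 0) (𝓝 0)

/-- The class `𝒮` of continuous `s : [0,∞) → [0,∞)` with `s(0)=0`, `s(λ)>0` for `λ>0`. -/
def memS (s : ℝ → ℝ) : Prop :=
  ContinuousOn s (Ici (0:ℝ)) ∧ s 0 = 0 ∧ (∀ l, 0 ≤ l → 0 ≤ s l) ∧ (∀ l, 0 < l → 0 < s l)

/-- `(s,ρ)` is a weak source-order pair: `s(λ)|r_α(λ)|/ρ(α) = O(1)` as `α → 0⁺`, each `λ>0`. -/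
def weakPair (G : SRM) (s ρ : ℝ → ℝ) : Prop :=
  ∀ l, 0 < l → ∃ k : ℝ, ∀ᶠ α in 𝓝[>] (0:ℝ), s l * |G.r α l| / ρ α ≤ k

/-- `(s,ρ)` is a strong source-order pair: weak, and the `O(1)` is never `o(1)`. -/
def strongPair (G : SRM) (s ρ : ℝ → ℝ) : Prop :=
  weakPair G s ρ ∧
    ∀ l, 0 < l → 0 < Filter.limsup (fun α => s l * |G.r α l| / ρ α) (𝓝[>] (0:ℝ))

/-- `(ρ,s)` is an order-source pair: `s(λ)|r_α(λ)|/ρ(α) ≥ γ` for all `λ ≥ h(α)`. -/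
def orderSourcePair (G : SRM) (ρ s : ℝ → ℝ) : Prop :=
  ∃ γ > (0:ℝ), ∃ h : ℝ → ℝ, (∀ α ∈ Ioo (0:ℝ) G.α₀, 0 < h α) ∧
    Tendsto h (𝓝[>] 0) (𝓝 0) ∧
    ∀ α ∈ Ioo (0:ℝ) G.α₀, ∀ l, h α ≤ l → γ ≤ s l * |G.r α l| / ρ α

/-- `ρ` is weak (generalized) qualification of `{g_α}`. -/
def weakQual (G : SRM) (ρ : ℝ → ℝ) : Prop := ∃ s, memS s ∧ weakPair G s ρ

/-- `ρ` is strong qualification of `{g_α}`. -/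
def strongQual (G : SRM) (ρ : ℝ → ℝ) : Prop := ∃ s, memS s ∧ strongPair G s ρ

/-- `ρ` is optimal qualification of `{g_α}`. -/
def optQual (G : SRM) (ρ : ℝ → ℝ) : Prop :=
  ∃ s, memS s ∧ strongPair G s ρ ∧ orderSourcePair G ρ s

/-- `s_ρ(λ) = liminf_{α→0⁺} ρ(α)/|r_α(λ)|`, valued in `[0,∞]`. -/
noncomputable def SRM.sLow (G : SRM) (ρ : ℝ → ℝ) (l : ℝ) : ENNReal :=
  Filter.liminf (fun α => ENNReal.ofReal (ρ α) / ENNReal.ofReal |G.r α l|) (𝓝[>] (0:ℝ))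

/-- If `(ρ,s)` is an order-source pair and `(s,ρ)` is a weak source-order pair,
then `(s,ρ)` is a strong source-order pair. -/
theorem strongPair_of_orderSource_weak (G : SRM) (s ρ : ℝ → ℝ)
    (hs : memS s) (hρ : memO ρ)
    (hos : orderSourcePair G ρ s) (hw : weakPair G s ρ) :
    strongPair G s ρ := by
  refine ⟨hw, fun l hl => ?_⟩
  obtain ⟨γ, hγ, h, hhpos, hh0, hbound⟩ := hos
  obtain ⟨k, hk⟩ := hw l hl
  have h1 : ∀ᶠ α in 𝓝[>] (0:ℝ), α ∈ Ioo (0:ℝ) G.α₀ :=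
    Ioo_mem_nhdsGT_of_mem ⟨le_refl 0, G.hα₀⟩
  have h2 : ∀ᶠ α in 𝓝[>] (0:ℝ), h α < l := hh0.eventually (gt_mem_nhds hl)
  have hev : ∀ᶠ α in 𝓝[>] (0:ℝ), γ ≤ s l * |G.r α l| / ρ α := by
    filter_upwards [h1, h2] with α hα hαl
    exact hbound α hα l hαl.le
  have hfreq : ∃ᶠ α in 𝓝[>] (0:ℝ), γ ≤ s l * |G.r α l| / ρ α :=
    hev.frequently
  calc (0:ℝ) < γ := hγ
    _ ≤ _ := Filter.le_limsup_of_frequently_le hfreq ⟨k, hk⟩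
end

section
/- Let {g_α} be a SRM such that for each fixed λ>0, g_α(λ) is decreasing in α. Suppose there exist an increasing function h:(0,α₀)→ℝ⁺ with lim_{α→0⁺}h(α)=0, a function ρ* ∈ 𝒪, and ε>0 such that sup_{λ ≥ h(α)} |r_α(λ)| ≤ ρ*(α) for all α∈(0,ε). Then ρ* is weak qualification of {g_α}, i.e. there exists s∈𝒮 such that (s,ρ*) is a weak source-order pair for {g_α}. -/
open Filter Topology Set

/-- Theorem 2.7 a): sufficient condition for weak qualification. -/
theorem weakQual_of_sup_bound (G : SRM)
    (hdec : ∀ l, 0 < l → AntitoneOn (fun α => G.g α l) (Ioo (0:ℝ) G.α₀))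
    (h : ℝ → ℝ) (hpos : ∀ α ∈ Ioo (0:ℝ) G.α₀, 0 < h α)
    (hmono : MonotoneOn h (Ioo (0:ℝ) G.α₀))
    (hlim : Tendsto h (𝓝[>] 0) (𝓝 0))
    (ρstar : ℝ → ℝ) (hρ : memO ρstar)
    (ε : ℝ) (hε : 0 < ε)
    (hbound : ∀ α ∈ Ioo (0:ℝ) ε, ∀ l, h α ≤ l → |G.r α l| ≤ ρstar α) :
    weakQual G ρstar := by
  refine ⟨id, ⟨continuous_id.continuousOn, rfl, fun l hl => hl, fun l hl => hl⟩, ?_⟩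
  intro l hl
  refine ⟨l, ?_⟩
  have h1 : ∀ᶠ α in 𝓝[>] (0:ℝ), h α < l := hlim (Filter.Tendsto.eventually_lt_const hl tendsto_id)
  have h2 : ∀ᶠ α in 𝓝[>] (0:ℝ), α ∈ Ioo (0:ℝ) ε := by
    filter_upwards [Ioo_mem_nhdsGT_of_mem ⟨le_refl 0, hε⟩, self_mem_nhdsWithin] with a ha hb
    exact ⟨hb, ha.2⟩
  filter_upwards [h1, h2, self_mem_nhdsWithin] with a h1a h2a h3a
  have hρa : 0 < ρstar a := hρ.1 a h3a
  have hr := hbound a h2a l h1a.le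
  have : |G.r a l| / ρstar a ≤ 1 := by
    rw [div_le_one hρa]; exact hr
  calc id l * |G.r a l| / ρstar a = l * (|G.r a l| / ρstar a) := by
        simp [id, mul_div_assoc]
    _ ≤ l * 1 := by exact mul_le_mul_of_nonneg_left this hl.le
    _ = l := by ring
end

section
/- Let {g_α} be a SRM such that for every α∈(0,α₀), r_α(λ)=1-λg_α(λ) is positive and monotone decreasing in λ on (0,∞), and for every fixed λ>0, g_α(λ) is decreasing in α. Then there exist an increasing function h:(0,α₀)→ℝ⁺ with lim_{α→0⁺}h(α)=0 and ρ* ∈ 𝒪 such that sup_{λ≥h(α)}|r_α(λ)| ≤ ρ*(α) for all α∈(0,α₀); in particular {g_α} has weak qualification. -/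
open Filter Topology Set

/-- Theorem 2.7 b): if `r_α` is positive and decreasing in `λ` (and `g_α(λ)` decreasing
in `α`), then `h` and `ρ*` as in part a) always exist; in particular `{g_α}` has weak
qualification. -/
theorem exists_h_rhoStar (G : SRM)
    (hdec : ∀ l, 0 < l → AntitoneOn (fun α => G.g α l) (Ioo (0:ℝ) G.α₀))
    (hrpos : ∀ α ∈ Ioo (0:ℝ) G.α₀, ∀ l, 0 < l → 0 < G.r α l)
    (hrdec : ∀ α ∈ Ioo (0:ℝ) G.α₀, AntitoneOn (fun l => G.r α l) (Ioi (0:ℝ))) :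
    ∃ h ρstar : ℝ → ℝ,
      (∀ α ∈ Ioo (0:ℝ) G.α₀, 0 < h α) ∧ MonotoneOn h (Ioo (0:ℝ) G.α₀) ∧
      Tendsto h (𝓝[>] 0) (𝓝 0) ∧ memO ρstar ∧
      (∀ α ∈ Ioo (0:ℝ) G.α₀, ∀ l, h α ≤ l → |G.r α l| ≤ ρstar α) ∧
      weakQual G ρstar := by
  classical
  -- Step 1: choose points c n where r is small at 1/(n+1)
  have hc : ∀ n : ℕ, ∃ x : ℝ, x ∈ Ioo (0:ℝ) G.α₀ ∧ x ≤ 1/(n+1) ∧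
      |G.r x ((1:ℝ)/(n+1))| ≤ 1/(n+1) := by
    intro n
    have hl : (0:ℝ) < 1/(n+1) := by positivity
    have hg := G.tendsto_inv _ hl
    have hr0 : Tendsto (fun α => G.r α ((1:ℝ)/(n+1))) (𝓝[>] (0:ℝ)) (𝓝 0) := by
      have h1 : Tendsto (fun α => 1 - ((1:ℝ)/(n+1)) * G.g α ((1:ℝ)/(n+1))) (𝓝[>] (0:ℝ))
          (𝓝 (1 - ((1:ℝ)/(n+1)) * (1/((1:ℝ)/(n+1))))) :=
        tendsto_const_nhds.sub (tendsto_const_nhds.mul hg)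
      have he : (1:ℝ) - ((1:ℝ)/(n+1)) * (1/((1:ℝ)/(n+1))) = 0 := by
        field_simp
        norm_num
      rw [he] at h1
      simpa [SRM.r] using h1
    have h2 : ∀ᶠ α in 𝓝[>] (0:ℝ), |G.r α ((1:ℝ)/(n+1))| ≤ 1/(n+1) := by
      have := hr0.eventually (Metric.ball_mem_nhds (0:ℝ) hl)
      filter_upwards [this] with α hα
      have : |G.r α ((1:ℝ)/(n+1)) - 0| < 1/(n+1) := by
        simpa [Metric.mem_ball, Real.dist_eq] using hα
      simpa using this.le
    have h3 : Ioo (0:ℝ) (min G.α₀ (1/(n+1))) ∈ 𝓝[>] (0:ℝ) :=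
      Ioo_mem_nhdsGT_of_mem ⟨le_refl 0, lt_min G.hα₀ hl⟩
    obtain ⟨x, hx1, hx2⟩ := (h2.and h3).exists
    exact ⟨x, ⟨hx2.1, hx2.2.trans_le (min_le_left _ _)⟩,
      (hx2.2.trans_le (min_le_right _ _)).le, hx1⟩
  choose c hcmem hcle hcr using hc
  -- Step 2: b n = min of c over 0..n
  set b : ℕ → ℝ := fun n => (Finset.range (n+1)).inf' Finset.nonempty_range_add_one c with hbdef
  have hble : ∀ n, b n ≤ c n := fun n =>
    Finset.inf'_le _ (Finset.self_mem_range_succ n)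
  have hbpos : ∀ n, 0 < b n := by
    intro n
    rw [hbdef]
    exact (Finset.lt_inf'_iff _).mpr fun k _ => (hcmem k).1
  have hb1 : ∀ n, b n ≤ 1/(n+1) := fun n => (hble n).trans (hcle n)
  have hbanti : Antitone b := by
    intro n m hnm
    apply Finset.le_inf'
    intro k hk
    exact Finset.inf'_le _ (Finset.mem_range.mpr
      (lt_of_lt_of_le (Finset.mem_range.mp hk) (by omega)))
  -- control from b
  have hcontrol : ∀ n, ∀ α ∈ Ioo (0:ℝ) G.α₀, α ≤ b n →
      G.r α ((1:ℝ)/(n+1)) ≤ 1/(n+1) := by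
    intro n α hα hαb
    have hl : (0:ℝ) < 1/(n+1) := by positivity
    have hαc : α ≤ c n := hαb.trans (hble n)
    have hg : G.g (c n) ((1:ℝ)/(n+1)) ≤ G.g α ((1:ℝ)/(n+1)) :=
      hdec _ hl hα (hcmem n) hαc
    have hmul := mul_le_mul_of_nonneg_left hg hl.le
    have h1 : G.r α ((1:ℝ)/(n+1)) ≤ G.r (c n) ((1:ℝ)/(n+1)) := by
      simp only [SRM.r]; linarith
    exact h1.trans ((le_abs_self _).trans (hcr n))
  -- Step 3: the index function m
  set m : ℝ → ℕ := fun α => sInf {n | b (n+1) < α} with hmdef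
  have hSne : ∀ α : ℝ, 0 < α → {n | b (n+1) < α}.Nonempty := by
    intro α hα
    obtain ⟨n, hn⟩ := exists_nat_one_div_lt hα
    refine ⟨n, lt_of_le_of_lt ((hb1 (n+1)).trans ?_) hn⟩
    apply one_div_le_one_div_of_le (by positivity)
    push_cast; linarith
  have hmem : ∀ α : ℝ, 0 < α → b (m α + 1) < α := fun α hα => Nat.sInf_mem (hSne α hα)
  have hm1 : ∀ α : ℝ, 0 < α → m α ≠ 0 → α ≤ b (m α) := by
    intro α hα h0
    have hlt : m α - 1 < m α := Nat.sub_lt (Nat.pos_of_ne_zero h0) one_pos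
    have := Nat.notMem_of_lt_sInf (s := {n | b (n+1) < α}) hlt
    have hnot : ¬ b (m α - 1 + 1) < α := this
    have heq : m α - 1 + 1 = m α := by omega
    rw [heq] at hnot
    exact le_of_not_gt hnot
  have hmanti : ∀ α α' : ℝ, 0 < α → α ≤ α' → m α' ≤ m α := by
    intro α α' hα hle
    exact Nat.sInf_le (lt_of_lt_of_le (hmem α hα) hle)
  have hmlarge : ∀ n : ℕ, ∀ α : ℝ, 0 < α → α < b (n+1) → n + 1 ≤ m α := by
    intro n α hα hαb
    by_contra hcon
    push_neg at hcon
    have hmem' := hmem α hα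
    have : b (n+1) ≤ b (m α + 1) := hbanti (by omega)
    linarith
  -- Step 4: define h and ρ*
  set h : ℝ → ℝ := fun α => 1/((m α : ℝ)+1) with hhdef
  set ρstar : ℝ → ℝ := fun α => (1 + G.C) * h α with hρdef
  have hhpos : ∀ α : ℝ, 0 < h α := fun α => by rw [hhdef]; positivity
  have hhmono : MonotoneOn h (Ioi (0:ℝ)) := by
    intro α hα α' _ hle
    apply one_div_le_one_div_of_le (by positivity)
    exact add_le_add_left (Nat.cast_le.mpr (hmanti α α' hα hle)) 1
  have hhtend : Tendsto h (𝓝[>] (0:ℝ)) (𝓝 0) := by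
    rw [Metric.tendsto_nhds]
    intro ε hε
    obtain ⟨n, hn⟩ := exists_nat_one_div_lt hε
    filter_upwards [Ioo_mem_nhdsGT_of_mem
      (show (0:ℝ) ∈ Ico (0:ℝ) (b (n+1)) from ⟨le_refl 0, hbpos (n+1)⟩)] with α hα
    have hge := hmlarge n α hα.1 hα.2
    have hha : h α ≤ 1/((n:ℝ)+1) := by
      rw [hhdef]
      apply one_div_le_one_div_of_le (by positivity)
      have : (n:ℝ) + 1 ≤ (m α : ℝ) := by exact_mod_cast hge
      linarith
    have : |h α| < ε := by
      rw [abs_of_pos (hhpos α)]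
      exact lt_of_le_of_lt hha hn
    simpa [Real.dist_eq] using this
  -- main estimate
  have hmain : ∀ α ∈ Ioo (0:ℝ) G.α₀, ∀ l, h α ≤ l → |G.r α l| ≤ ρstar α := by
    intro α hα l hl
    have hl0 : 0 < l := lt_of_lt_of_le (hhpos α) hl
    rw [abs_of_pos (hrpos α hα l hl0)]
    by_cases hm0 : m α = 0
    · have hb' := G.bound α hα l hl0.le
      have habs := abs_le.mp hb'
      have h1 : G.r α l ≤ 1 + G.C := by
        simp only [SRM.r]; linarith [habs.1]
      have : ρstar α = 1 + G.C := by
        rw [hρdef, hhdef]; simp [hm0]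
      linarith
    · have hαb : α ≤ b (m α) := hm1 α hα.1 hm0
      obtain ⟨k, hk⟩ : ∃ k, m α = k + 1 := ⟨m α - 1, (Nat.succ_pred_eq_of_ne_zero hm0).symm⟩
      have hcon := hcontrol (m α) α hα hαb
      have hheq : h α = (1:ℝ)/((m α : ℝ) + 1) := by rw [hhdef]
      have h2 : G.r α l ≤ G.r α (h α) :=
        hrdec α hα (mem_Ioi.mpr (hhpos α)) (mem_Ioi.mpr hl0) hl
      have h3 : G.r α (h α) ≤ h α := by rw [hheq]; exact hcon
      have h4 : h α ≤ ρstar α := by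
        rw [hρdef]
        exact le_mul_of_one_le_left (hhpos α).le (by linarith [G.hC])
      linarith
  refine ⟨h, ρstar, fun α _ => hhpos α, hhmono.mono Ioo_subset_Ioi_self, hhtend,
    ⟨fun a _ => mul_pos (by linarith [G.hC]) (hhpos a), ?_, ?_⟩, hmain, ?_⟩
  · intro α hα α' hα' hle
    exact mul_le_mul_of_nonneg_left (hhmono hα hα' hle) (by linarith [G.hC])
  · have h0 : Tendsto (fun α => (1 + G.C) * h α) (𝓝[>] (0:ℝ)) (𝓝 ((1 + G.C) * 0)) :=
      hhtend.const_mul _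
    rw [mul_zero] at h0
    exact h0
  · refine ⟨fun l => l, ⟨continuous_id.continuousOn, rfl, fun l hl => hl, fun l hl => hl⟩, ?_⟩
    intro l hl
    refine ⟨l, ?_⟩
    filter_upwards [hhtend.eventually_lt_const hl,
      Ioo_mem_nhdsGT_of_mem (show (0:ℝ) ∈ Ico (0:ℝ) G.α₀ from ⟨le_refl 0, G.hα₀⟩)]
      with α hαl hα
    have hr := hmain α hα l hαl.le
    have hρ : 0 < ρstar α := mul_pos (by linarith [G.hC]) (hhpos α)
    rw [div_le_iff₀ hρ]
    calc l * |G.r α l| ≤ l * ρstar α := mul_le_mul_of_nonneg_left hr hl.le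
      _ = l * ρstar α := rfl
end

section
/- If (s,ρ₁) and (s,ρ₂) are strong source-order pairs for the SRM {g_α} and the limit lim_{α→0⁺} ρ₁(α)/ρ₂(α) exists, then ρ₁ ≈ ρ₂, i.e. there exist ε>0 and 0<c₁<c₂<∞ with c₁ρ₁(α) ≤ ρ₂(α) ≤ c₂ρ₁(α) for all α∈(0,ε). -/
open Filter Topology Set

/-- Uniqueness of the order: if `(s,ρ₁)` and `(s,ρ₂)` are strong source-order pairs and
`lim_{α→0⁺} ρ₁(α)/ρ₂(α)` exists, then `ρ₁ ≈ ρ₂` at the origin. -/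
theorem order_unique (G : SRM) (s ρ₁ ρ₂ : ℝ → ℝ)
    (hs : memS s) (hρ₁ : memO ρ₁) (hρ₂ : memO ρ₂)
    (h₁ : strongPair G s ρ₁) (h₂ : strongPair G s ρ₂)
    (hlim : ∃ L : ℝ, Tendsto (fun α => ρ₁ α / ρ₂ α) (𝓝[>] 0) (𝓝 L)) :
    ∃ ε > (0:ℝ), ∃ c₁ c₂ : ℝ, 0 < c₁ ∧ c₁ < c₂ ∧
      ∀ α ∈ Ioo (0:ℝ) ε, c₁ * ρ₁ α ≤ ρ₂ α ∧ ρ₂ α ≤ c₂ * ρ₁ α := by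
  obtain ⟨L, hL⟩ := hlim
  -- L ≥ 0
  have hpos : ∀ᶠ α in 𝓝[>] (0:ℝ), 0 < ρ₁ α ∧ 0 < ρ₂ α := by
    filter_upwards [self_mem_nhdsWithin] with α (hα : 0 < α)
    exact ⟨hρ₁.1 α hα, hρ₂.1 α hα⟩
  have hL0 : 0 ≤ L := by
    refine le_of_tendsto_of_tendsto tendsto_const_nhds hL ?_
    filter_upwards [hpos] with α ⟨h1, h2⟩
    exact le_of_lt (div_pos h1 h2)
  -- L ≠ 0
  have hLpos : 0 < L := by
    rcases hL0.lt_or_eq with h | h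
    · exact h
    · exfalso
      obtain ⟨k, hk⟩ := h₁.1 1 one_pos
      have hzero : Tendsto (fun α => s 1 * |G.r α 1| / ρ₂ α) (𝓝[>] (0:ℝ)) (𝓝 0) := by
        have hupper : ∀ᶠ α in 𝓝[>] (0:ℝ),
            s 1 * |G.r α 1| / ρ₂ α ≤ k * (ρ₁ α / ρ₂ α) := by
          filter_upwards [hk, hpos] with α hkα ⟨h1, h2⟩
          have : s 1 * |G.r α 1| / ρ₂ α = (s 1 * |G.r α 1| / ρ₁ α) * (ρ₁ α / ρ₂ α) := by
            field_simp
          rw [this]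
          exact mul_le_mul_of_nonneg_right hkα (le_of_lt (div_pos h1 h2))
        have hlower : ∀ᶠ α in 𝓝[>] (0:ℝ), 0 ≤ s 1 * |G.r α 1| / ρ₂ α := by
          filter_upwards [hpos] with α ⟨h1, h2⟩
          exact div_nonneg (mul_nonneg (hs.2.2.1 1 zero_le_one) (abs_nonneg _)) h2.le
        have hten : Tendsto (fun α => k * (ρ₁ α / ρ₂ α)) (𝓝[>] (0:ℝ)) (𝓝 0) := by
          have := (tendsto_const_nhds (x := k)).mul hL
          rw [← h] at this
          simpa using this
        exact squeeze_zero' hlower hupper hten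
      have hls := h₂.2 1 one_pos
      rw [hzero.limsup_eq] at hls
      exact lt_irrefl 0 hls
  -- L > 0: get eventual bounds
  have hev : ∀ᶠ α in 𝓝[>] (0:ℝ), ρ₁ α / ρ₂ α ∈ Ioo (L/2) (2*L) :=
    hL (Ioo_mem_nhds (by linarith) (by linarith))
  obtain ⟨ε, hε, hεall⟩ := mem_nhdsGT_iff_exists_Ioo_subset.mp (hev.and hpos)
  refine ⟨ε, hε, 1/(2*L), 2/L + 1, by positivity, ?_, ?_⟩
  · rw [div_add' _ _ _ (by positivity), div_lt_div_iff₀ (by positivity) (by positivity)]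
    nlinarith
  · intro α hα
    obtain ⟨⟨hlo, hhi⟩, h1, h2⟩ := hεall hα
    constructor
    · rw [div_mul_eq_mul_div, div_le_iff₀ (by positivity)]
      rw [div_lt_iff₀ h2] at hhi
      nlinarith
    · rw [lt_div_iff₀ h2] at hlo
      have : ρ₂ α ≤ (2/L) * ρ₁ α := by
        rw [div_mul_eq_mul_div, le_div_iff₀ hLpos]
        nlinarith
      nlinarith
end

section
/- The truncated singular value decomposition method, defined by g_α(λ)=1/λ for λ≥α and g_α(λ)=0 for 0≤λ<α, has no strong qualification: for every ρ∈𝒪 and every λ>0, s_ρ(λ) = liminf_{α→0⁺} ρ(α)/|r_α(λ)| = +∞, while every ρ∈𝒪 is weak qualification of the method. -/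
open Filter Topology Set

/-- Example 2 (TSVD): every `ρ ∈ 𝒪` is weak qualification, `s_ρ(λ) = +∞` for all
`λ > 0`, and the method has no strong qualification. -/
theorem tsvd_no_strong (G : SRM)
    (hg : ∀ α ∈ Ioo (0:ℝ) G.α₀, ∀ l : ℝ, 0 ≤ l →
      G.g α l = if α ≤ l then 1 / l else 0) :
    (∀ ρ : ℝ → ℝ, memO ρ → ∀ l, 0 < l → G.sLow ρ l = ⊤) ∧
    (∀ ρ : ℝ → ℝ, memO ρ → weakQual G ρ) ∧
    ¬ ∃ ρ : ℝ → ℝ, memO ρ ∧ strongQual G ρ := by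
  have hr : ∀ l : ℝ, 0 < l → ∀ᶠ α in 𝓝[>] (0:ℝ), G.r α l = 0 := by
    intro l hl
    have hmem : Ioo (0:ℝ) (min l G.α₀) ∈ 𝓝[>] (0:ℝ) :=
      Ioo_mem_nhdsGT_of_mem ⟨le_refl 0, lt_min hl G.hα₀⟩
    filter_upwards [hmem] with α hα
    have hαI : α ∈ Ioo (0:ℝ) G.α₀ := ⟨hα.1, hα.2.trans_le (min_le_right _ _)⟩
    have : G.g α l = 1 / l := by
      rw [hg α hαI l hl.le, if_pos (hα.2.trans_le (min_le_left _ _)).le]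
    simp [SRM.r, this, mul_inv_cancel₀ hl.ne']
  refine ⟨?_, ?_, ?_⟩
  · intro ρ hρ l hl
    have h2 : ∀ᶠ α in 𝓝[>] (0:ℝ),
        (fun α => ENNReal.ofReal (ρ α) / ENNReal.ofReal |G.r α l|) α = (⊤ : ENNReal) := by
      filter_upwards [hr l hl, self_mem_nhdsWithin] with α hα hα'
      have : ENNReal.ofReal (ρ α) ≠ 0 := by
        simp [ENNReal.ofReal_eq_zero, not_le, hρ.1 α hα']
      simp [hα, ENNReal.div_zero this]
    rw [SRM.sLow, Filter.liminf_congr h2, Filter.liminf_const]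
  · intro ρ hρ
    refine ⟨id, ⟨continuousOn_id, rfl, fun l hl => hl, fun l hl => hl⟩, ?_⟩
    intro l hl
    refine ⟨0, ?_⟩
    filter_upwards [hr l hl] with α hα
    simp [hα]
  · rintro ⟨ρ, hρ, s, hs, hw, hstrong⟩
    have h1 := hstrong 1 one_pos
    have : Filter.limsup (fun α => s 1 * |G.r α 1| / ρ α) (𝓝[>] (0:ℝ)) = 0 := by
      have h2 : ∀ᶠ α in 𝓝[>] (0:ℝ), (fun α => s 1 * |G.r α 1| / ρ α) α = (0:ℝ) := by
        filter_upwards [hr 1 one_pos] with α hα; simp [hα]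
      rw [Filter.limsup_congr h2, Filter.limsup_const]
    rw [this] at h1
    exact lt_irrefl 0 h1
end

section
/- For the SRM defined by g_α(λ) = (1-e^{-1/α})/(λ+e^{-1/α}), so that r_α(λ)=(1+λ)/(1+λe^{1/α}), the function ρ(α)=e^{-1/α} is optimal qualification: s_ρ(λ)=λ/(1+λ) for all λ>0, and s_ρ(λ)|r_α(λ)|/ρ(α) = λ/(λ+e^{-1/α}) ≥ 1/2 for all λ ≥ e^{-1/α}. Moreover this method has no classical qualification: for every μ>0 and λ≥0, |r_α(λ)|λ^μ/α^μ → 0 as α→0⁺. -/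
open Filter Topology Set

section Aux

private lemma exp_tendsto_zero' : Tendsto (fun a : ℝ => Real.exp (-1/a)) (𝓝[>] 0) (𝓝 0) := by
  have h1 : Tendsto (fun a : ℝ => -1/a) (𝓝[>] 0) atBot := by
    rw [show (fun a : ℝ => -1/a) = fun a : ℝ => -(a⁻¹) by funext a; rw [neg_div, one_div]]
    exact tendsto_neg_atTop_atBot.comp tendsto_inv_nhdsGT_zero
  exact Real.tendsto_exp_atBot.comp h1

private lemma r_formula' (G : SRM)
    (hg : ∀ α ∈ Ioo (0:ℝ) G.α₀, ∀ l : ℝ, 0 ≤ l →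
      G.g α l = (1 - Real.exp (-1/α)) / (l + Real.exp (-1/α)))
    {α : ℝ} (hα : α ∈ Ioo (0:ℝ) G.α₀) {l : ℝ} (hl : 0 ≤ l) :
    G.r α l = Real.exp (-1/α) * (1 + l) / (l + Real.exp (-1/α)) := by
  have he : 0 < Real.exp (-1/α) := Real.exp_pos _
  have hd : l + Real.exp (-1/α) ≠ 0 := by positivity
  rw [SRM.r, hg α hα l hl]
  field_simp
  ring

private lemma half_le' (α : ℝ) (hα : 0 < α) (l : ℝ) (hl : Real.exp (-1/α) ≤ l) :
    (1:ℝ)/2 ≤ l / (l + Real.exp (-1/α)) := by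
  have he : 0 < Real.exp (-1/α) := Real.exp_pos _
  have hl0 : 0 < l := lt_of_lt_of_le he hl
  rw [le_div_iff₀ (by positivity)]
  linarith

end Aux

/-- Example 3: for `g_α(λ)=(1-e^{-1/α})/(λ+e^{-1/α})` (so `r_α(λ)=(1+λ)/(1+λe^{1/α})`),
`ρ(α)=e^{-1/α}` is optimal qualification with `s_ρ(λ)=λ/(1+λ)`, the order-source
inequality holds with `γ = 1/2`, `h(α)=e^{-1/α}`, and the method has no classical
qualification: `|r_α(λ)|λ^μ/α^μ → 0` for every `μ > 0`, `λ ≥ 0`. -/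
theorem example3_optimal (G : SRM)
    (hg : ∀ α ∈ Ioo (0:ℝ) G.α₀, ∀ l : ℝ, 0 ≤ l →
      G.g α l = (1 - Real.exp (-1/α)) / (l + Real.exp (-1/α))) :
    (∀ l : ℝ, 0 < l →
      G.sLow (fun a => Real.exp (-1/a)) l = ENNReal.ofReal (l / (1 + l))) ∧
    (∀ α : ℝ, 0 < α → ∀ l : ℝ, Real.exp (-1/α) ≤ l →
      (1:ℝ)/2 ≤ l / (l + Real.exp (-1/α))) ∧
    optQual G (fun a => Real.exp (-1/a)) ∧
    (∀ μ : ℝ, 0 < μ → ∀ l : ℝ, 0 ≤ l →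
      Tendsto (fun α => |G.r α l| * l ^ μ / α ^ μ) (𝓝[>] 0) (𝓝 0)) :=  by
  have hIoo : Ioo (0:ℝ) G.α₀ ∈ 𝓝[>] (0:ℝ) := Ioo_mem_nhdsGT_of_mem (by simp [G.hα₀])
  have key : ∀ α ∈ Ioo (0:ℝ) G.α₀, ∀ l : ℝ, 0 < l →
      l / (1 + l) * |G.r α l| / Real.exp (-1/α) = l / (l + Real.exp (-1/α)) := by
    intro α hα l hl
    have he : 0 < Real.exp (-1/α) := Real.exp_pos _
    have hr := r_formula' G hg hα hl.le
    have hrpos : 0 < G.r α l := by rw [hr]; positivity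
    rw [abs_of_pos hrpos, hr]
    field_simp
  refine ⟨?_, fun α hα l hl => half_le' α hα l hl, ?_, ?_⟩
  · -- sLow computation
    intro l hl
    have h1 : (fun α => ENNReal.ofReal (Real.exp (-1/α)) / ENNReal.ofReal |G.r α l|)
        =ᶠ[𝓝[>] (0:ℝ)] fun α => ENNReal.ofReal ((l + Real.exp (-1/α)) / (1 + l)) := by
      filter_upwards [hIoo] with α hα
      have he : 0 < Real.exp (-1/α) := Real.exp_pos _
      have hr := r_formula' G hg hα hl.le
      have hrpos : 0 < G.r α l := by rw [hr]; positivity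
      rw [abs_of_pos hrpos, ← ENNReal.ofReal_div_of_pos hrpos]
      congr 1
      rw [hr]
      field_simp
    have h2 : Tendsto (fun α => ENNReal.ofReal ((l + Real.exp (-1/α)) / (1 + l)))
        (𝓝[>] (0:ℝ)) (𝓝 (ENNReal.ofReal (l / (1 + l)))) := by
      apply (ENNReal.continuous_ofReal.tendsto _).comp
      have h3 : Tendsto (fun α : ℝ => (l + Real.exp (-1/α)) / (1 + l)) (𝓝[>] (0:ℝ))
          (𝓝 ((l + 0) / (1 + l))) :=
        (tendsto_const_nhds.add exp_tendsto_zero').div_const _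
      simpa using h3
    rw [SRM.sLow, liminf_congr h1, h2.liminf_eq]
  · -- optQual
    refine ⟨fun l => l / (1 + l), ⟨?_, by simp, fun l hl => by positivity,
      fun l hl => by positivity⟩, ⟨?_, ?_⟩, ?_⟩
    · exact (continuous_id.continuousOn).div
        ((continuous_const.add continuous_id).continuousOn)
        (fun x hx => by have : (0:ℝ) ≤ x := hx; positivity)
    · -- weak pair
      intro l hl
      refine ⟨1, ?_⟩
      filter_upwards [hIoo] with α hα
      rw [key α hα l hl, div_le_one (by positivity)]
      have he : 0 < Real.exp (-1/α) := Real.exp_pos _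
      linarith
    · -- limsup positive
      intro l hl
      have heq : (fun α => l / (1 + l) * |G.r α l| / Real.exp (-1/α))
          =ᶠ[𝓝[>] (0:ℝ)] fun α => l / (l + Real.exp (-1/α)) := by
        filter_upwards [hIoo] with α hα
        exact key α hα l hl
      have htend : Tendsto (fun α : ℝ => l / (l + Real.exp (-1/α))) (𝓝[>] (0:ℝ)) (𝓝 1) := by
        have h4 : Tendsto (fun α : ℝ => l / (l + Real.exp (-1/α))) (𝓝[>] (0:ℝ))
            (𝓝 (l / (l + 0))) :=
          tendsto_const_nhds.div (tendsto_const_nhds.add exp_tendsto_zero')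
            (by simpa using hl.ne')
        simpa [div_self hl.ne'] using h4
      rw [limsup_congr heq, htend.limsup_eq]
      norm_num
    · -- order-source pair
      refine ⟨1/2, by norm_num, fun α => Real.exp (-1/α), fun α _ => Real.exp_pos _,
        exp_tendsto_zero', fun α hα l hl => ?_⟩
      have he : 0 < Real.exp (-1/α) := Real.exp_pos _
      have hl0 : 0 < l := lt_of_lt_of_le he hl
      rw [key α hα l hl0]
      exact half_le' α hα.1 l hl
  · -- no classical qualification
    intro μ hμ l hl
    rcases hl.eq_or_lt with rfl | hl0
    · simpa [Real.zero_rpow hμ.ne'] using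
        (tendsto_const_nhds : Tendsto (fun _ : ℝ => (0:ℝ)) (𝓝[>] (0:ℝ)) (𝓝 0))
    · have key4 : Tendsto (fun α : ℝ => (1/α) ^ μ * Real.exp (-(1/α))) (𝓝[>] (0:ℝ)) (𝓝 0) := by
        have h2 : Tendsto (fun x : ℝ => x ^ μ * Real.exp (-x)) atTop (𝓝 0) := by
          simpa using tendsto_rpow_mul_exp_neg_mul_atTop_nhds_zero μ 1 one_pos
        have h1 : Tendsto (fun α : ℝ => 1/α) (𝓝[>] (0:ℝ)) atTop := by
          simpa [one_div] using tendsto_inv_nhdsGT_zero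
        exact h2.comp h1
      have hG : Tendsto (fun α : ℝ => ((1+l)/l * l ^ μ) * ((1/α) ^ μ * Real.exp (-(1/α))))
          (𝓝[>] (0:ℝ)) (𝓝 0) := by
        simpa using key4.const_mul ((1+l)/l * l ^ μ)
      apply squeeze_zero' ?_ ?_ hG
      · filter_upwards [hIoo] with α hα
        have : 0 < α := hα.1
        positivity
      · filter_upwards [hIoo] with α hα
        have hα0 : 0 < α := hα.1
        have he : 0 < Real.exp (-1/α) := Real.exp_pos _
        have hr := r_formula' G hg hα hl0.le
        have hrle : |G.r α l| ≤ Real.exp (-1/α) * (1 + l) / l := by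
          rw [hr, abs_of_pos (by rw [← hr]; rw [hr]; positivity)]
          gcongr
          linarith
        have hαμ : 0 < α ^ μ := Real.rpow_pos_of_pos hα0 μ
        have hrw : ((1+l)/l * l ^ μ) * ((1/α) ^ μ * Real.exp (-(1/α)))
            = Real.exp (-1/α) * (1 + l) / l * l ^ μ / α ^ μ := by
          have h1α : (1/α:ℝ) ^ μ = 1 / α ^ μ := by
            rw [Real.div_rpow zero_le_one hα0.le, Real.one_rpow]
          rw [h1α, show (-1:ℝ)/α = -(1/α) from by ring]
          field_simp
        rw [hrw]
        calc |G.r α l| * l ^ μ / α ^ μ = |G.r α l| * (l ^ μ / α ^ μ) := by ring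
          _ ≤ (Real.exp (-1/α) * (1 + l) / l) * (l ^ μ / α ^ μ) := by
              apply mul_le_mul_of_nonneg_right hrle (by positivity)
          _ = Real.exp (-1/α) * (1 + l) / l * l ^ μ / α ^ μ := by ring
end

section
/- Fix k>0 and define r_α(λ) = e^{-λ/α} + α^k λ^{-1/2}|sin(λ^{3/2}/α)| for α,λ>0. Then with ρ(α)=α^k: (i) s_ρ(λ) := liminf_{α→0⁺} ρ(α)/r_α(λ) = λ^{1/2} for every λ>0, hence ρ is strong qualification; (ii) for every λ>0, liminf_{α→0⁺} λ^{1/2} r_α(λ)/α^k = 0, hence ρ is not optimal qualification. -/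
open Filter Topology Set

private lemma ex8_exp_tendsto (l k : ℝ) (hl : 0 < l) :
    Tendsto (fun α : ℝ => Real.exp (-l/α) / α ^ k) (𝓝[>] (0:ℝ)) (𝓝 0) := by
  have h1 : Tendsto (fun α : ℝ => α⁻¹) (𝓝[>] (0:ℝ)) atTop := tendsto_inv_nhdsGT_zero
  have h3 := (tendsto_rpow_mul_exp_neg_mul_atTop_nhds_zero k l hl).comp h1
  refine h3.congr' ?_
  filter_upwards [self_mem_nhdsWithin] with α (hα : α ∈ Ioi (0:ℝ))
  have hα' : (0:ℝ) < α := hα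
  simp only [Function.comp]
  rw [Real.inv_rpow hα'.le, mul_comm, ← div_eq_mul_inv, ← div_eq_mul_inv]

private lemma ex8_phi_tendsto (l k : ℝ) (hl : 0 < l) :
    Tendsto (fun α : ℝ => α ^ k / (Real.exp (-l/α) + α ^ k * l ^ (-(1:ℝ)/2)))
      (𝓝[>] (0:ℝ)) (𝓝 (Real.sqrt l)) := by
  have hc : (0:ℝ) < l ^ (-(1:ℝ)/2) := Real.rpow_pos_of_pos hl _
  have h0 : Tendsto (fun α : ℝ => Real.exp (-l/α) / α ^ k + l ^ (-(1:ℝ)/2)) (𝓝[>] (0:ℝ))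
      (𝓝 (0 + l ^ (-(1:ℝ)/2))) := (ex8_exp_tendsto l k hl).add tendsto_const_nhds
  rw [zero_add] at h0
  have h1 := h0.inv₀ hc.ne'
  have hval : (l ^ (-(1:ℝ)/2))⁻¹ = Real.sqrt l := by
    rw [Real.sqrt_eq_rpow, ← Real.rpow_neg hl.le]
    norm_num
  rw [hval] at h1
  refine h1.congr' ?_
  filter_upwards [self_mem_nhdsWithin] with α (hα : α ∈ Ioi (0:ℝ))
  have hαk : (0:ℝ) < α ^ k := Real.rpow_pos_of_pos hα _
  rw [div_add' _ _ _ hαk.ne', inv_div, mul_comm]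

private lemma ex8_sqrt_mul (l : ℝ) (hl : 0 < l) : Real.sqrt l * l ^ (-(1:ℝ)/2) = 1 := by
  rw [Real.sqrt_eq_rpow, ← Real.rpow_add hl]
  norm_num

private lemma ex8_r_facts (G : SRM) (k : ℝ)
    (hr : ∀ α ∈ Ioo (0:ℝ) G.α₀, ∀ l : ℝ, 0 < l →
      G.r α l = Real.exp (-l/α) + α ^ k * l ^ (-(1:ℝ)/2) * |Real.sin (l ^ ((3:ℝ)/2) / α)|)
    (l : ℝ) (hl : 0 < l) (α : ℝ) (hα : α ∈ Ioo (0:ℝ) G.α₀) :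
    0 < G.r α l ∧ G.r α l ≤ Real.exp (-l/α) + α ^ k * l ^ (-(1:ℝ)/2) ∧
      Real.sqrt l * G.r α l / α ^ k
        = Real.sqrt l * (Real.exp (-l/α) / α ^ k) + |Real.sin (l ^ ((3:ℝ)/2) / α)| := by
  have hα0 : (0:ℝ) < α := hα.1
  have hαk : (0:ℝ) < α ^ k := Real.rpow_pos_of_pos hα0 _
  have hc : (0:ℝ) < l ^ (-(1:ℝ)/2) := Real.rpow_pos_of_pos hl _
  have hE : (0:ℝ) < Real.exp (-l/α) := Real.exp_pos _
  have habs : (0:ℝ) ≤ |Real.sin (l ^ ((3:ℝ)/2) / α)| := abs_nonneg _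
  have hs1 : |Real.sin (l ^ ((3:ℝ)/2) / α)| ≤ 1 := Real.abs_sin_le_one _
  have heq := hr α hα l hl
  have hmul := ex8_sqrt_mul l hl
  refine ⟨?_, ?_, ?_⟩
  · rw [heq]; positivity
  · rw [heq]
    nlinarith [mul_pos hαk hc]
  · rw [heq, mul_add, add_div, mul_div_assoc]
    congr 1
    rw [div_eq_iff hαk.ne']
    linear_combination α ^ k * |Real.sin (l ^ ((3:ℝ)/2) / α)| * hmul

private lemma ex8_seq (c : ℝ) (hc : 0 < c) (w : ℕ → ℝ) (hw : Tendsto w atTop atTop)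
    (hwpos : ∀ n, 0 < w n) :
    Tendsto (fun n => c / w n) atTop (𝓝[>] (0:ℝ)) := by
  refine tendsto_nhdsWithin_of_tendsto_nhds_of_eventually_within _ ?_ ?_
  · have := hw.inv_tendsto_atTop.const_mul c
    simpa [div_eq_mul_inv] using this
  · exact Eventually.of_forall fun n => div_pos hc (hwpos n)

private lemma ex8_wa : Tendsto (fun n : ℕ => Real.pi/2 + n * Real.pi) atTop atTop := by
  apply tendsto_atTop_add_const_left
  exact Tendsto.atTop_mul_const Real.pi_pos tendsto_natCast_atTop_atTop

private lemma ex8_wb : Tendsto (fun n : ℕ => ((n:ℝ)+1) * Real.pi) atTop atTop := by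
  apply Tendsto.atTop_mul_const Real.pi_pos
  exact tendsto_atTop_add_const_right _ _ tendsto_natCast_atTop_atTop

private lemma ex8_a_exists (l : ℝ) (hl : 0 < l) :
    ∃ a : ℕ → ℝ, Tendsto a atTop (𝓝[>] (0:ℝ)) ∧
      ∀ n, |Real.sin (l ^ ((3:ℝ)/2) / a n)| = 1 := by
  have hl32 : (0:ℝ) < l ^ ((3:ℝ)/2) := Real.rpow_pos_of_pos hl _
  have hpos : ∀ n : ℕ, (0:ℝ) < Real.pi/2 + n * Real.pi := by
    intro n
    have h1 : (0:ℝ) ≤ (n:ℝ) * Real.pi := by positivity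
    linarith [Real.pi_pos]
  refine ⟨fun n => l ^ ((3:ℝ)/2) / (Real.pi/2 + n * Real.pi), ex8_seq _ hl32 _ ex8_wa hpos, ?_⟩
  intro n
  rw [div_div_cancel₀ hl32.ne', Real.sin_add_nat_mul_pi, Real.sin_pi_div_two, mul_one,
    abs_pow, abs_neg, abs_one, one_pow]

private lemma ex8_b_exists (l : ℝ) (hl : 0 < l) :
    ∃ b : ℕ → ℝ, Tendsto b atTop (𝓝[>] (0:ℝ)) ∧
      ∀ n, Real.sin (l ^ ((3:ℝ)/2) / b n) = 0 := by
  have hl32 : (0:ℝ) < l ^ ((3:ℝ)/2) := Real.rpow_pos_of_pos hl _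
  have hpos : ∀ n : ℕ, (0:ℝ) < ((n:ℝ)+1) * Real.pi := by
    intro n
    have := Real.pi_pos
    positivity
  refine ⟨fun n => l ^ ((3:ℝ)/2) / (((n:ℝ)+1) * Real.pi), ex8_seq _ hl32 _ ex8_wb hpos, ?_⟩
  intro n
  rw [div_div_cancel₀ hl32.ne']
  have h : ((n:ℝ)+1) = ((n+1 : ℕ):ℝ) := by push_cast; ring
  rw [h, Real.sin_nat_mul_pi]

/-- Example 8: with `r_α(λ) = e^{-λ/α} + α^k λ^{-1/2}|sin(λ^{3/2}/α)|` and `ρ(α)=α^k`,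
one has `s_ρ(λ)=λ^{1/2}` (so `ρ` is strong qualification), but
`liminf_{α→0⁺} λ^{1/2} r_α(λ)/α^k = 0`, so `ρ` is not optimal qualification. -/
theorem example8_strong_not_optimal (G : SRM) (k : ℝ) (hk : 0 < k)
    (hr : ∀ α ∈ Ioo (0:ℝ) G.α₀, ∀ l : ℝ, 0 < l →
      G.r α l = Real.exp (-l/α)
        + α ^ k * l ^ (-(1:ℝ)/2) * |Real.sin (l ^ ((3:ℝ)/2) / α)|) :
    (∀ l : ℝ, 0 < l →
      G.sLow (fun a => a ^ k) l = ENNReal.ofReal (Real.sqrt l)) ∧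
    strongQual G (fun a => a ^ k) ∧
    (∀ l : ℝ, 0 < l →
      Filter.liminf (fun α => Real.sqrt l * G.r α l / α ^ k) (𝓝[>] (0:ℝ)) = 0) ∧
    ¬ optQual G (fun a => a ^ k) := by
  have hIoo : ∀ᶠ α in 𝓝[>] (0:ℝ), α ∈ Ioo (0:ℝ) G.α₀ :=
    eventually_mem_set.2 (Ioo_mem_nhdsGT_of_mem ⟨le_refl 0, G.hα₀⟩)
  -- frequently the normalized residual is small
  have key3 : ∀ l : ℝ, 0 < l → ∀ ε : ℝ, 0 < ε → ∃ᶠ α in 𝓝[>] (0:ℝ),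
      α ∈ Ioo (0:ℝ) G.α₀ ∧ Real.sqrt l * G.r α l / α ^ k ≤ ε := by
    intro l hl ε hε
    obtain ⟨b, hb, hsb⟩ := ex8_b_exists l hl
    apply hb.frequently
    apply Eventually.frequently
    have h0 : Tendsto (fun n => Real.sqrt l * (Real.exp (-l/(b n)) / (b n) ^ k)) atTop
        (𝓝 (Real.sqrt l * 0)) := ((ex8_exp_tendsto l k hl).comp hb).const_mul _
    rw [mul_zero] at h0
    filter_upwards [hb.eventually hIoo, h0.eventually_lt_const hε] with n hn h1
    obtain ⟨-, -, hQ⟩ := ex8_r_facts G k hr l hl (b n) hn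
    refine ⟨hn, ?_⟩
    rw [hQ, hsb n, abs_zero, add_zero]
    exact h1.le
  -- eventually the normalized residual is at most 2
  have hQle : ∀ l : ℝ, 0 < l → ∀ᶠ α in 𝓝[>] (0:ℝ),
      α ∈ Ioo (0:ℝ) G.α₀ ∧ 0 < G.r α l ∧ Real.sqrt l * G.r α l / α ^ k ≤ 2 := by
    intro l hl
    have h0 : Tendsto (fun α => Real.sqrt l * (Real.exp (-l/α) / α ^ k)) (𝓝[>] (0:ℝ))
        (𝓝 (Real.sqrt l * 0)) := (ex8_exp_tendsto l k hl).const_mul _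
    rw [mul_zero] at h0
    filter_upwards [hIoo, h0.eventually_lt_const one_pos] with α hα h1
    obtain ⟨hrpos, -, hQ⟩ := ex8_r_facts G k hr l hl α hα
    refine ⟨hα, hrpos, ?_⟩
    rw [hQ]
    have := Real.abs_sin_le_one (l ^ ((3:ℝ)/2) / α)
    linarith
  refine ⟨?_, ?_, ?_, ?_⟩
  · -- part (i): sLow = √l
    intro l hl
    have hphi := ex8_phi_tendsto l k hl
    obtain ⟨a, ha, hsa⟩ := ex8_a_exists l hl
    unfold SRM.sLow
    apply le_antisymm
    · -- liminf ≤ ofReal √l, along the subsequence a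
      have h1 : Filter.liminf
            (fun α => ENNReal.ofReal (α ^ k) / ENNReal.ofReal |G.r α l|) (𝓝[>] (0:ℝ))
          ≤ Filter.liminf
            (fun α => ENNReal.ofReal (α ^ k) / ENNReal.ofReal |G.r α l|) (map a atTop) :=
        liminf_le_liminf_of_le ha
      refine h1.trans (le_of_eq ?_)
      rw [← liminf_comp]
      have h2 : Tendsto
          (fun n => ENNReal.ofReal ((a n) ^ k / (Real.exp (-l/(a n)) + (a n) ^ k * l ^ (-(1:ℝ)/2))))
          atTop (𝓝 (ENNReal.ofReal (Real.sqrt l))) :=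
        (ENNReal.continuous_ofReal.tendsto _).comp (hphi.comp ha)
      have h3 : Tendsto
          (fun n => ENNReal.ofReal ((a n) ^ k) / ENNReal.ofReal |G.r (a n) l|)
          atTop (𝓝 (ENNReal.ofReal (Real.sqrt l))) := by
        refine h2.congr' ?_
        filter_upwards [ha.eventually hIoo] with n hn
        obtain ⟨hrpos, -, -⟩ := ex8_r_facts G k hr l hl (a n) hn
        have hreq : G.r (a n) l = Real.exp (-l/(a n)) + (a n) ^ k * l ^ (-(1:ℝ)/2) := by
          rw [hr (a n) hn l hl, hsa n, mul_one]
        rw [← hreq, abs_of_pos hrpos, ENNReal.ofReal_div_of_pos hrpos]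
      exact h3.liminf_eq
    · -- ofReal √l ≤ liminf
      have hge : ∀ᶠ α in 𝓝[>] (0:ℝ),
          ENNReal.ofReal (α ^ k / (Real.exp (-l/α) + α ^ k * l ^ (-(1:ℝ)/2)))
            ≤ ENNReal.ofReal (α ^ k) / ENNReal.ofReal |G.r α l| := by
        filter_upwards [hIoo] with α hα
        obtain ⟨hrpos, hrle, -⟩ := ex8_r_facts G k hr l hl α hα
        rw [abs_of_pos hrpos, ← ENNReal.ofReal_div_of_pos hrpos]
        exact ENNReal.ofReal_le_ofReal
          (div_le_div_of_nonneg_left (Real.rpow_pos_of_pos hα.1 k).le hrpos hrle)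
      calc ENNReal.ofReal (Real.sqrt l)
          = Filter.liminf (fun α => ENNReal.ofReal
              (α ^ k / (Real.exp (-l/α) + α ^ k * l ^ (-(1:ℝ)/2)))) (𝓝[>] (0:ℝ)) :=
            ((ENNReal.continuous_ofReal.tendsto _).comp hphi).liminf_eq.symm
        _ ≤ _ := Filter.liminf_le_liminf hge
  · -- part (ii): strong qualification, with s = √·
    refine ⟨Real.sqrt, ⟨Real.continuous_sqrt.continuousOn, Real.sqrt_zero,
      fun x _ => Real.sqrt_nonneg x, fun x hx => Real.sqrt_pos.2 hx⟩, ?_, ?_⟩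
    · intro l hl
      refine ⟨2, ?_⟩
      filter_upwards [hQle l hl] with α ⟨hα, hrpos, hle⟩
      rwa [abs_of_pos hrpos]
    · intro l hl
      have hbdd : IsBoundedUnder (· ≤ ·) (𝓝[>] (0:ℝ))
          (fun α => Real.sqrt l * |G.r α l| / α ^ k) := by
        refine ⟨2, ?_⟩
        rw [eventually_map]
        filter_upwards [hQle l hl] with α ⟨hα, hrpos, hle⟩
        rwa [abs_of_pos hrpos]
      have hfreq : ∃ᶠ α in 𝓝[>] (0:ℝ), (1:ℝ) ≤ Real.sqrt l * |G.r α l| / α ^ k := by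
        obtain ⟨a, ha, hsa⟩ := ex8_a_exists l hl
        apply ha.frequently
        apply Eventually.frequently
        filter_upwards [ha.eventually hIoo] with n hn
        obtain ⟨hrpos, -, hQ⟩ := ex8_r_facts G k hr l hl (a n) hn
        rw [abs_of_pos hrpos, hQ, hsa n]
        have h1 : (0:ℝ) ≤ Real.sqrt l * (Real.exp (-l/(a n)) / (a n) ^ k) := by
          have := Real.exp_pos (-l/(a n))
          have h2 : (0:ℝ) < (a n) ^ k := Real.rpow_pos_of_pos hn.1 _
          positivity
        linarith
      exact lt_of_lt_of_le one_pos (le_limsup_of_frequently_le hfreq hbdd)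
  · -- part (iii): liminf = 0
    intro l hl
    have hbdd_ge : IsBoundedUnder (· ≥ ·) (𝓝[>] (0:ℝ))
        (fun α => Real.sqrt l * G.r α l / α ^ k) := by
      refine ⟨0, ?_⟩
      rw [eventually_map]
      filter_upwards [hIoo] with α hα
      have hrpos := (ex8_r_facts G k hr l hl α hα).1
      have hαk : (0:ℝ) < α ^ k := Real.rpow_pos_of_pos hα.1 _
      positivity
    apply le_antisymm
    · refine le_of_forall_gt_imp_ge_of_dense ?_
      intro ε hε
      exact liminf_le_of_frequently_le ((key3 l hl ε hε).mono fun α h => h.2) hbdd_ge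
    · have hble : IsBoundedUnder (· ≤ ·) (𝓝[>] (0:ℝ))
          (fun α => Real.sqrt l * G.r α l / α ^ k) := by
        refine ⟨2, ?_⟩
        rw [eventually_map]
        filter_upwards [hQle l hl] with α ⟨hα, hrpos, hle⟩
        exact hle
      refine le_liminf_of_le hble.isCoboundedUnder_ge ?_
      filter_upwards [hIoo] with α hα
      have hrpos := (ex8_r_facts G k hr l hl α hα).1
      have hαk : (0:ℝ) < α ^ k := Real.rpow_pos_of_pos hα.1 _
      positivity
  · -- part (iv): not optimal
    rintro ⟨s, hsS, -, γ, hγ, h, -, hh0, hbnd⟩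
    have hs1 : 0 < s 1 := hsS.2.2.2 1 one_pos
    have hev : ∀ᶠ α in 𝓝[>] (0:ℝ), γ ≤ s 1 * |G.r α 1| / α ^ k := by
      filter_upwards [hIoo, hh0.eventually_lt_const one_pos] with α hα h1
      exact hbnd α hα 1 h1.le
    have hfr : ∃ᶠ α in 𝓝[>] (0:ℝ), s 1 * |G.r α 1| / α ^ k < γ := by
      refine (key3 1 one_pos (γ/(2 * s 1)) (by positivity)).mono ?_
      rintro α ⟨hα, hle⟩
      have hrpos := (ex8_r_facts G k hr 1 one_pos α hα).1
      rw [Real.sqrt_one, one_mul] at hle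
      rw [abs_of_pos hrpos]
      calc s 1 * G.r α 1 / α ^ k = s 1 * (G.r α 1 / α ^ k) := by ring
        _ ≤ s 1 * (γ/(2 * s 1)) := mul_le_mul_of_nonneg_left hle hs1.le
        _ = γ/2 := by field_simp
        _ < γ := by linarith
    obtain ⟨α, hlt, hge⟩ := (hfr.and_eventually hev).exists
    exact absurd hge (not_le.2 hlt)
end

section
/- Define r_α(λ) = e^{-λ/α} + e^{-1/√α} λ^{-1/2}|sin(λ^{3/2}/α)| for α,λ>0 and ρ(α)=e^{-1/√α}. Then s_ρ(λ) = liminf_{α→0⁺} ρ(α)/r_α(λ) = λ^{1/2} for every λ>0 (so ρ is strong qualification), but for every λ>0, liminf_{α→0⁺} λ^{1/2} r_α(λ)/ρ(α) = liminf_{α→0⁺} (λ^{1/2} e^{1/√α - λ/α} + |sin(λ^{3/2}/α)|) = 0, so ρ is not optimal qualification. -/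
open Filter Topology Set

namespace Ex9

noncomputable def E (l α : ℝ) : ℝ := Real.exp (1 / Real.sqrt α - l / α)
noncomputable def S (l α : ℝ) : ℝ := |Real.sin (l ^ ((3:ℝ)/2) / α)|

lemma E_pos (l α : ℝ) : 0 < E l α := Real.exp_pos _
lemma S_nonneg (l α : ℝ) : 0 ≤ S l α := abs_nonneg _
lemma S_le_one (l α : ℝ) : S l α ≤ 1 := Real.abs_sin_le_one _

lemma tendsto_one_div_sqrt :
    Tendsto (fun α : ℝ => 1 / Real.sqrt α) (𝓝[>] (0:ℝ)) atTop := by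
  have h1 : Tendsto Real.sqrt (𝓝[>] (0:ℝ)) (𝓝[>] (0:ℝ)) := by
    rw [tendsto_nhdsWithin_iff]
    constructor
    · have := Real.continuous_sqrt.continuousAt (x := (0:ℝ))
      simpa [Real.sqrt_zero] using this.mono_left nhdsWithin_le_nhds
    · filter_upwards [self_mem_nhdsWithin] with a ha
      exact mem_Ioi.2 (Real.sqrt_pos.2 ha)
  simpa [one_div, Function.comp_def] using tendsto_inv_nhdsGT_zero.comp h1

lemma tendsto_E (l : ℝ) (hl : 0 < l) : Tendsto (E l) (𝓝[>] (0:ℝ)) (𝓝 0) := by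
  have hpoly : Tendsto (fun t : ℝ => t - l * t ^ 2) atTop atBot := by
    apply tendsto_atBot_mono' atTop (f₁ := fun t : ℝ => -t) ?_ (tendsto_neg_atBot_iff.2 tendsto_id)
    filter_upwards [eventually_ge_atTop (2 / l), eventually_ge_atTop (0:ℝ)] with t ht ht0
    · have h2 : 2 ≤ l * t := by
        rw [div_le_iff₀ hl] at ht; nlinarith
      nlinarith
  have hcomp : Tendsto (fun α : ℝ => 1 / Real.sqrt α - l * (1 / Real.sqrt α) ^ 2)
      (𝓝[>] (0:ℝ)) atBot := hpoly.comp tendsto_one_div_sqrt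
  have heq : ∀ᶠ α in 𝓝[>] (0:ℝ),
      1 / Real.sqrt α - l * (1 / Real.sqrt α) ^ 2 = 1 / Real.sqrt α - l / α := by
    filter_upwards [self_mem_nhdsWithin] with α hα
    have : Real.sqrt α ^ 2 = α := Real.sq_sqrt (le_of_lt hα)
    have hs : Real.sqrt α ≠ 0 := ne_of_gt (Real.sqrt_pos.2 hα)
    rw [div_pow, one_pow, this, mul_one_div]
  have : Tendsto (fun α : ℝ => 1 / Real.sqrt α - l / α) (𝓝[>] (0:ℝ)) atBot :=
    Tendsto.congr' heq hcomp
  exact Real.tendsto_exp_atBot.comp this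


/-- the sequence `c/(nπ+d)` tends to `0⁺`. -/
lemma seq_tendsto (c d : ℝ) (hc : 0 < c) (hd : 0 < d) :
    Tendsto (fun n : ℕ => c / ((n:ℝ) * Real.pi + d)) atTop (𝓝[>] (0:ℝ)) := by
  have hden : Tendsto (fun n : ℕ => (n:ℝ) * Real.pi + d) atTop atTop :=
    (tendsto_natCast_atTop_atTop.atTop_mul_const Real.pi_pos).atTop_add tendsto_const_nhds
  rw [tendsto_nhdsWithin_iff]
  refine ⟨Tendsto.div_atTop tendsto_const_nhds hden, ?_⟩
  filter_upwards [hden.eventually_gt_atTop 0] with n hn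
  exact mem_Ioi.2 (div_pos hc hn)

lemma seq_inv (c d : ℝ) (hc : 0 < c) {n : ℕ} (hn : (0:ℝ) < (n:ℝ) * Real.pi + d) :
    c / (c / ((n:ℝ) * Real.pi + d)) = (n:ℝ) * Real.pi + d := by
  field_simp

lemma S_zero_seq (l : ℝ) (hl : 0 < l) (n : ℕ) :
    S l (l ^ ((3:ℝ)/2) / ((n:ℝ) * Real.pi + Real.pi)) = 0 := by
  have hc : (0:ℝ) < l ^ ((3:ℝ)/2) := Real.rpow_pos_of_pos hl _
  have hn : (0:ℝ) < (n:ℝ) * Real.pi + Real.pi := by positivity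
  unfold S
  rw [seq_inv _ _ hc hn]
  have : (n:ℝ) * Real.pi + Real.pi = ((n+1 : ℕ):ℝ) * Real.pi := by push_cast; ring
  rw [this, Real.sin_nat_mul_pi, abs_zero]

lemma S_one_seq (l : ℝ) (hl : 0 < l) (n : ℕ) :
    S l (l ^ ((3:ℝ)/2) / ((n:ℝ) * Real.pi + Real.pi / 2)) = 1 := by
  have hc : (0:ℝ) < l ^ ((3:ℝ)/2) := Real.rpow_pos_of_pos hl _
  have hn : (0:ℝ) < (n:ℝ) * Real.pi + Real.pi / 2 := by positivity
  unfold S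
  rw [seq_inv _ _ hc hn, Real.sin_add_pi_div_two]
  have : ((n:ℝ) * Real.pi) = (n:ℝ) * Real.pi - 0 := by ring
  rw [this, Real.cos_nat_mul_pi_sub, Real.cos_zero, mul_one, abs_pow, abs_neg, abs_one, one_pow]


variable {G : SRM}

def HR (G : SRM) : Prop := ∀ α ∈ Ioo (0:ℝ) G.α₀, ∀ l : ℝ, 0 < l →
      G.r α l = Real.exp (-l/α)
        + Real.exp (-1 / Real.sqrt α) * l ^ (-(1:ℝ)/2) * |Real.sin (l ^ ((3:ℝ)/2) / α)|

lemma r_eq (hr : HR G) {α l : ℝ} (hα : α ∈ Ioo (0:ℝ) G.α₀) (hl : 0 < l) :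
    G.r α l = Real.exp (-1 / Real.sqrt α) * (E l α + (Real.sqrt l)⁻¹ * S l α) := by
  rw [hr α hα l hl]
  have h1 : l ^ (-(1:ℝ)/2) = (Real.sqrt l)⁻¹ := by
    have h : (-(1:ℝ)/2) = -(1/2 : ℝ) := by norm_num
    rw [h, Real.rpow_neg hl.le, ← Real.sqrt_eq_rpow]
  have h2 : Real.exp (-l/α) = Real.exp (-1/Real.sqrt α) * E l α := by
    unfold E; rw [← Real.exp_add]; congr 1; ring
  rw [h1, h2]; unfold S; ring

lemma r_pos (hr : HR G) {α l : ℝ} (hα : α ∈ Ioo (0:ℝ) G.α₀) (hl : 0 < l) :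
    0 < G.r α l := by
  rw [r_eq hr hα hl]
  have := E_pos l α
  have := S_nonneg l α
  have h3 : (0:ℝ) < Real.sqrt l := Real.sqrt_pos.2 hl
  positivity

lemma ratio1 (hr : HR G) {α l : ℝ} (hα : α ∈ Ioo (0:ℝ) G.α₀) (hl : 0 < l) :
    Real.sqrt l * |G.r α l| / Real.exp (-1 / Real.sqrt α)
      = Real.sqrt l * E l α + S l α := by
  rw [abs_of_pos (r_pos hr hα hl), r_eq hr hα hl]
  have h3 : Real.sqrt l ≠ 0 := ne_of_gt (Real.sqrt_pos.2 hl)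
  have h4 : Real.exp (-1 / Real.sqrt α) ≠ 0 := Real.exp_ne_zero _
  field_simp

lemma ratio2 (hr : HR G) {α l : ℝ} (hα : α ∈ Ioo (0:ℝ) G.α₀) (hl : 0 < l) :
    Real.exp (-1 / Real.sqrt α) / |G.r α l|
      = (E l α + (Real.sqrt l)⁻¹ * S l α)⁻¹ := by
  rw [abs_of_pos (r_pos hr hα hl), r_eq hr hα hl]
  have h4 : Real.exp (-1 / Real.sqrt α) ≠ 0 := Real.exp_ne_zero _
  have h5 : E l α + (Real.sqrt l)⁻¹ * S l α ≠ 0 := by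
    have := E_pos l α
    have := S_nonneg l α
    have h3 : (0:ℝ) < Real.sqrt l := Real.sqrt_pos.2 hl
    positivity
  rw [eq_comm, inv_eq_iff_eq_inv, eq_comm, inv_div, div_eq_iff h4]
  ring

lemma f_pos (l α : ℝ) (hl : 0 < l) : 0 < E l α + (Real.sqrt l)⁻¹ * S l α := by
  have := E_pos l α
  have := S_nonneg l α
  have h3 : (0:ℝ) < Real.sqrt l := Real.sqrt_pos.2 hl
  positivity


lemma ratio3 (hr : HR G) {α l : ℝ} (hα : α ∈ Ioo (0:ℝ) G.α₀) (hl : 0 < l) :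
    |G.r α l| / Real.exp (-1 / Real.sqrt α) = E l α + (Real.sqrt l)⁻¹ * S l α := by
  rw [abs_of_pos (r_pos hr hα hl), r_eq hr hα hl,
    mul_div_cancel_left₀ _ (Real.exp_ne_zero _)]

lemma hIoo (G : SRM) : Ioo (0:ℝ) G.α₀ ∈ 𝓝[>] (0:ℝ) :=
  Ioo_mem_nhdsGT_of_mem ⟨le_refl _, G.hα₀⟩

lemma sLow_eq (hr : HR G) (l : ℝ) (hl : 0 < l) :
    G.sLow (fun a => Real.exp (-1 / Real.sqrt a)) l = ENNReal.ofReal (Real.sqrt l) := by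
  have hsl : (0:ℝ) < Real.sqrt l := Real.sqrt_pos.2 hl
  have hEq : (fun α => ENNReal.ofReal (Real.exp (-1/Real.sqrt α)) / ENNReal.ofReal |G.r α l|)
      =ᶠ[𝓝[>] (0:ℝ)]
      (fun α => ENNReal.ofReal ((E l α + (Real.sqrt l)⁻¹ * S l α)⁻¹)) := by
    filter_upwards [hIoo G] with α hα
    rw [← ENNReal.ofReal_div_of_pos (abs_pos.2 (ne_of_gt (r_pos hr hα hl))), ratio2 hr hα hl]
  unfold SRM.sLow
  rw [liminf_congr hEq]
  apply le_antisymm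
  · -- liminf ≤ ofReal √l : frequently along the |sin| = 1 sequence
    apply liminf_le_of_frequently_le'
    have hseq := seq_tendsto (l ^ ((3:ℝ)/2)) (Real.pi/2)
      (Real.rpow_pos_of_pos hl _) (by positivity)
    apply hseq.frequently
    apply Frequently.of_forall
    intro n
    rw [S_one_seq l hl n]
    apply ENNReal.ofReal_le_ofReal
    rw [mul_one]
    calc (E l _ + (Real.sqrt l)⁻¹)⁻¹ ≤ ((Real.sqrt l)⁻¹)⁻¹ := by
          apply inv_anti₀ (by positivity)
          linarith [E_pos l (l ^ ((3:ℝ)/2) / ((n:ℝ) * Real.pi + Real.pi / 2))]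
      _ = Real.sqrt l := inv_inv _
  · rw [le_liminf_iff]
    intro y hy
    have hyt : y ≠ ⊤ := ne_top_of_lt (lt_of_lt_of_le hy le_top)
    have hb : y.toReal < Real.sqrt l := by
      rwa [ENNReal.lt_ofReal_iff_toReal_lt hyt] at hy
    set b : ℝ := max y.toReal 0 with hbdef
    have hb2 : b < Real.sqrt l := max_lt hb hsl
    set c : ℝ := (b + Real.sqrt l) / 2 with hcdef
    have hc0 : 0 < c := by
      have : (0:ℝ) ≤ b := le_max_right _ _
      simp only [hcdef]; linarith
    have hcl : c < Real.sqrt l := by simp only [hcdef]; linarith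
    have hbc : b < c := by simp only [hcdef]; linarith
    have hδ : (0:ℝ) < c⁻¹ - (Real.sqrt l)⁻¹ := by
      have := (inv_lt_inv₀ hsl hc0).2 hcl
      linarith
    filter_upwards [(tendsto_E l hl).eventually_lt_const hδ] with α hE
    have hfα : 0 < E l α + (Real.sqrt l)⁻¹ * S l α := f_pos l α hl
    have hflt : E l α + (Real.sqrt l)⁻¹ * S l α < c⁻¹ := by
      have h1 : (Real.sqrt l)⁻¹ * S l α ≤ (Real.sqrt l)⁻¹ * 1 :=
        mul_le_mul_of_nonneg_left (S_le_one l α) (by positivity)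
      rw [mul_one] at h1
      linarith
    have : c < (E l α + (Real.sqrt l)⁻¹ * S l α)⁻¹ := (lt_inv_comm₀ hc0 hfα).2 hflt
    have hy2 : y.toReal < (E l α + (Real.sqrt l)⁻¹ * S l α)⁻¹ :=
      lt_of_le_of_lt (le_trans (le_max_left _ _) hbc.le) this
    exact (ENNReal.lt_ofReal_iff_toReal_lt hyt).2 hy2

lemma liminf_u_zero (l : ℝ) (hl : 0 < l) :
    Filter.liminf (fun α => Real.sqrt l * E l α + S l α) (𝓝[>] (0:ℝ)) = 0 := by
  have hbd : IsBoundedUnder (· ≥ ·) (𝓝[>] (0:ℝ)) (fun α => Real.sqrt l * E l α + S l α) :=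
    isBoundedUnder_of_eventually_ge (Eventually.of_forall fun α => by
      have := E_pos l α; have := S_nonneg l α; positivity)
  apply le_antisymm
  · apply le_of_forall_pos_le_add
    intro ε hε
    rw [zero_add]
    apply liminf_le_of_frequently_le _ hbd
    have hseq := seq_tendsto (l ^ ((3:ℝ)/2)) Real.pi
      (Real.rpow_pos_of_pos hl _) Real.pi_pos
    apply hseq.frequently
    have hEcomp : Tendsto (fun n : ℕ => Real.sqrt l *
        E l (l ^ ((3:ℝ)/2) / ((n:ℝ) * Real.pi + Real.pi))) atTop (𝓝 0) := by
      have := ((tendsto_E l hl).comp hseq).const_mul (Real.sqrt l)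
      simpa using this
    apply Eventually.frequently
    filter_upwards [hEcomp.eventually_le_const hε] with n hn
    rw [S_zero_seq l hl n, add_zero]
    exact hn
  · apply le_liminf_of_le
    · exact (isBoundedUnder_of_eventually_le (a := Real.sqrt l + 1) (by
        filter_upwards [(tendsto_E l hl).eventually_le_const zero_lt_one] with α hE
        have h1 := S_le_one l α
        have h2 := Real.sqrt_nonneg l
        nlinarith)).isCoboundedUnder_ge
    · exact Eventually.of_forall fun α => by
        have := E_pos l α; have := S_nonneg l α; positivity

end Ex9

/-- Example 9: with `r_α(λ) = e^{-λ/α} + e^{-1/√α} λ^{-1/2}|sin(λ^{3/2}/α)|` and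
`ρ(α)=e^{-1/√α}`, one has `s_ρ(λ)=λ^{1/2}` (so `ρ` is strong qualification), but
`liminf_{α→0⁺} λ^{1/2} r_α(λ)/ρ(α) = liminf (λ^{1/2} e^{1/√α - λ/α} + |sin(λ^{3/2}/α)|) = 0`,
so `ρ` is not optimal qualification. -/
theorem example9_strong_not_optimal (G : SRM)
    (hr : ∀ α ∈ Ioo (0:ℝ) G.α₀, ∀ l : ℝ, 0 < l →
      G.r α l = Real.exp (-l/α)
        + Real.exp (-1 / Real.sqrt α) * l ^ (-(1:ℝ)/2) * |Real.sin (l ^ ((3:ℝ)/2) / α)|) :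
    (∀ l : ℝ, 0 < l →
      G.sLow (fun a => Real.exp (-1 / Real.sqrt a)) l = ENNReal.ofReal (Real.sqrt l)) ∧
    strongQual G (fun a => Real.exp (-1 / Real.sqrt a)) ∧
    (∀ l : ℝ, 0 < l →
      Filter.liminf
        (fun α => Real.sqrt l * G.r α l / Real.exp (-1 / Real.sqrt α)) (𝓝[>] (0:ℝ)) = 0 ∧
      Filter.liminf
        (fun α => Real.sqrt l * Real.exp (1 / Real.sqrt α - l/α)
          + |Real.sin (l ^ ((3:ℝ)/2) / α)|) (𝓝[>] (0:ℝ)) = 0) ∧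
    ¬ optQual G (fun a => Real.exp (-1 / Real.sqrt a)) := by
  have hr' : Ex9.HR G := hr
  have hweak : weakPair G Real.sqrt (fun a => Real.exp (-1 / Real.sqrt a)) := by
    intro l hl
    refine ⟨Real.sqrt l + 1, ?_⟩
    filter_upwards [Ex9.hIoo G, (Ex9.tendsto_E l hl).eventually_le_const zero_lt_one]
      with α hα hE
    rw [Ex9.ratio1 hr' hα hl]
    have h1 := Ex9.S_le_one l α
    have h2 := Real.sqrt_nonneg l
    nlinarith
  refine ⟨fun l hl => Ex9.sLow_eq hr' l hl, ?_, ?_, ?_⟩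
  · -- strongQual
    refine ⟨Real.sqrt,
      ⟨Real.continuous_sqrt.continuousOn, Real.sqrt_zero,
        fun l _ => Real.sqrt_nonneg l, fun l hl => Real.sqrt_pos.2 hl⟩,
      hweak, ?_⟩
    intro l hl
    have hbd : IsBoundedUnder (· ≤ ·) (𝓝[>] (0:ℝ))
        (fun α => Real.sqrt l * |G.r α l| / Real.exp (-1 / Real.sqrt α)) := by
      apply isBoundedUnder_of_eventually_le (a := Real.sqrt l + 1)
      filter_upwards [Ex9.hIoo G, (Ex9.tendsto_E l hl).eventually_le_const zero_lt_one]
        with α hα hE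
      rw [Ex9.ratio1 hr' hα hl]
      have h1 := Ex9.S_le_one l α
      have h2 := Real.sqrt_nonneg l
      nlinarith
    have hseq := Ex9.seq_tendsto (l ^ ((3:ℝ)/2)) (Real.pi/2)
      (Real.rpow_pos_of_pos hl _) (by positivity)
    have hfreq : ∃ᶠ α in 𝓝[>] (0:ℝ),
        1 ≤ Real.sqrt l * |G.r α l| / Real.exp (-1 / Real.sqrt α) := by
      apply hseq.frequently
      apply Eventually.frequently
      filter_upwards [hseq.eventually (Ex9.hIoo G)] with n hn
      rw [Ex9.ratio1 hr' hn hl, Ex9.S_one_seq l hl n]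
      have h3 := Ex9.E_pos l (l ^ ((3:ℝ)/2) / ((n:ℝ) * Real.pi + Real.pi / 2))
      have h2 := Real.sqrt_nonneg l
      nlinarith
    exact lt_of_lt_of_le one_pos (le_limsup_of_frequently_le hfreq hbd)
  · -- the two liminfs
    intro l hl
    constructor
    · have heq : (fun α => Real.sqrt l * G.r α l / Real.exp (-1 / Real.sqrt α))
          =ᶠ[𝓝[>] (0:ℝ)] (fun α => Real.sqrt l * Ex9.E l α + Ex9.S l α) := by
        filter_upwards [Ex9.hIoo G] with α hα
        rw [← Ex9.ratio1 hr' hα hl, abs_of_pos (Ex9.r_pos hr' hα hl)]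
      rw [liminf_congr heq]
      exact Ex9.liminf_u_zero l hl
    · exact Ex9.liminf_u_zero l hl
  · -- not optimal
    rintro ⟨s, hs, hsp, γ, hγ, h, hhpos, hh0, hbound⟩
    have hseq := Ex9.seq_tendsto ((1:ℝ) ^ ((3:ℝ)/2)) Real.pi
      (Real.rpow_pos_of_pos one_pos _) Real.pi_pos
    have hev : ∀ᶠ α in 𝓝[>] (0:ℝ),
        γ ≤ s 1 * (Ex9.E 1 α + (Real.sqrt 1)⁻¹ * Ex9.S 1 α) := by
      filter_upwards [Ex9.hIoo G, hh0.eventually_lt_const zero_lt_one] with α hα hh1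
      have hb := hbound α hα 1 hh1.le
      rwa [mul_div_assoc, Ex9.ratio3 hr' hα one_pos] at hb
    have hn : ∀ᶠ n : ℕ in atTop, γ ≤ s 1 *
        Ex9.E 1 ((1:ℝ) ^ ((3:ℝ)/2) / ((n:ℝ) * Real.pi + Real.pi)) := by
      filter_upwards [hseq.eventually hev] with n hn
      rwa [Ex9.S_zero_seq 1 one_pos n, mul_zero, add_zero] at hn
    have htend : Tendsto (fun n : ℕ => s 1 *
        Ex9.E 1 ((1:ℝ) ^ ((3:ℝ)/2) / ((n:ℝ) * Real.pi + Real.pi))) atTop (𝓝 0) := by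
      have := ((Ex9.tendsto_E 1 one_pos).comp hseq).const_mul (s 1)
      simpa using this
    have : γ ≤ 0 := ge_of_tendsto htend hn
    linarith
end

section
/- Let {g_α} be a SRM, T:X→Y bounded linear, R_α = g_α(T*T)T*, y ∈ D(T†), x† = T†y. If (ρ,s) is an order-source pair for {g_α} and ‖R_α y - x†‖ = O(ρ(α)) as α→0⁺, then x† ∈ R(s(T*T)). -/
open Filter Topology Set
open scoped InnerProductSpace

section AuxCutoff
open Filter Topology Set

/-- Piecewise-linear cutoff: `0` on `(-∞, h]`, `1` on `[2h, ∞)`. -/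
noncomputable def cutoff (h l : ℝ) : ℝ := max 0 (min 1 (l / h - 1))

lemma cutoff_continuous (h : ℝ) : Continuous (cutoff h) :=
  continuous_const.max (continuous_const.min ((continuous_id.div_const h).sub continuous_const))

lemma cutoff_nonneg (h l : ℝ) : 0 ≤ cutoff h l := le_max_left _ _

lemma cutoff_le_one (h l : ℝ) : cutoff h l ≤ 1 := max_le zero_le_one (min_le_left _ _)

lemma cutoff_eq_zero {h l : ℝ} (hh : 0 < h) (hl : l ≤ h) : cutoff h l = 0 := by
  have h1 : l / h ≤ 1 := div_le_one_of_le₀ hl hh.le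
  exact max_eq_left ((min_le_right _ _).trans (by linarith))

lemma cutoff_eq_one {h l : ℝ} (hh : 0 < h) (hl : 2 * h ≤ l) : cutoff h l = 1 := by
  have h2 : (2:ℝ) ≤ l / h := (le_div_iff₀ hh).mpr (by linarith)
  unfold cutoff
  rw [min_eq_left (by linarith), max_eq_right (by linarith)]

lemma cutoff_abs {h l : ℝ} (hh : 0 < h) (hl : 0 ≤ l) : |(cutoff h l - 1) * l| ≤ 2 * h := by
  rcases le_or_gt l (2 * h) with h1 | h1
  · rw [abs_mul, abs_of_nonneg hl]
    have h2 : |cutoff h l - 1| ≤ 1 :=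
      abs_le.mpr ⟨by linarith [cutoff_nonneg h l], by linarith [cutoff_le_one h l]⟩
    nlinarith [abs_nonneg (cutoff h l - 1)]
  · rw [cutoff_eq_one hh h1.le]
    simp
    positivity

end AuxCutoff

section AuxHilbert
open Filter Topology Set ContinuousLinearMap
open scoped InnerProductSpace

lemma cutoff_div_continuousOn {s : ℝ → ℝ} (hs : memS s) {h : ℝ} (hh : 0 < h) :
    ContinuousOn (fun l => cutoff h l / s l) (Ici 0) := by
  intro l hl
  rcases eq_or_lt_of_le (Set.mem_Ici.mp hl) with hl' | hl'
  · subst hl'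
    have hmem : Ico (0:ℝ) h ∈ 𝓝[Ici 0] (0:ℝ) := Ico_mem_nhdsGE hh
    refine ContinuousWithinAt.congr_of_eventuallyEq (f := fun _ : ℝ => (0:ℝ))
      continuousWithinAt_const ?_ ?_
    · exact Filter.eventually_of_mem hmem fun x hx => by
        show cutoff h x / s x = 0
        rw [cutoff_eq_zero hh hx.2.le, zero_div]
    · show cutoff h 0 / s 0 = 0
      rw [cutoff_eq_zero hh hh.le, zero_div]
  · exact ContinuousWithinAt.div (cutoff_continuous h).continuousWithinAt
      (hs.1 l hl'.le) (ne_of_gt (hs.2.2.2 l hl'))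

variable {X : Type*} [NormedAddCommGroup X] [InnerProductSpace ℂ X] [CompleteSpace X]

lemma aux_inner_sq (A : X →L[ℂ] X) (f : ℝ → ℝ)
    (hf : ContinuousOn f (spectrum ℝ A)) (x : X) :
    RCLike.re (⟪cfc (fun l => f l * f l) A x, x⟫_ℂ) = ‖cfc f A x‖ ^ 2 := by
  have h1 : cfc (fun l => f l * f l) A = cfc f A * cfc f A := cfc_mul f f A hf hf
  have hsa : IsSelfAdjoint (cfc f A) := cfc_predicate f A
  have h2 : adjoint (cfc f A) = cfc f A := by rw [← star_eq_adjoint]; exact hsa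
  rw [h1, ContinuousLinearMap.mul_apply]
  conv_lhs => rw [← h2]
  rw [adjoint_inner_left, h2]
  exact @inner_self_eq_norm_sq ℂ X _ _ _ (cfc f A x)

lemma aux_norm_le (A : X →L[ℂ] X) (f g : ℝ → ℝ)
    (hf : ContinuousOn f (spectrum ℝ A)) (hg : ContinuousOn g (spectrum ℝ A))
    (hfg : ∀ l ∈ spectrum ℝ A, f l ^ 2 ≤ g l ^ 2) (x : X) :
    ‖cfc f A x‖ ≤ ‖cfc g A x‖ := by
  have hP : (0 : X →L[ℂ] X) ≤ cfc (fun l => g l * g l - f l * f l) A :=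
    cfc_nonneg fun l hl => by nlinarith [hfg l hl]
  have hsub : cfc (fun l => g l * g l - f l * f l) A
      = cfc (fun l => g l * g l) A - cfc (fun l => f l * f l) A :=
    cfc_sub _ _ A (hg.mul hg) (hf.mul hf)
  rw [nonneg_iff_isPositive] at hP
  have h3 := hP.re_inner_nonneg_left x
  rw [hsub, sub_apply, inner_sub_left, map_sub] at h3
  rw [aux_inner_sq A f hf x, aux_inner_sq A g hg x] at h3
  have := norm_nonneg (cfc f A x)
  have := norm_nonneg (cfc g A x)
  nlinarith

lemma aux_norm_le_const (A : X →L[ℂ] X) (hA : IsSelfAdjoint A) (f : ℝ → ℝ)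
    (hf : ContinuousOn f (spectrum ℝ A)) (M : ℝ) (hM : 0 ≤ M)
    (hfM : ∀ l ∈ spectrum ℝ A, |f l| ≤ M) (x : X) :
    ‖cfc f A x‖ ≤ M * ‖x‖ := by
  have h1 : ‖cfc f A x‖ ≤ ‖cfc (fun _ : ℝ => M) A x‖ := by
    apply aux_norm_le A f _ hf continuousOn_const _ x
    intro l hl
    calc f l ^ 2 = |f l| ^ 2 := (sq_abs _).symm
      _ ≤ M ^ 2 := pow_le_pow_left₀ (abs_nonneg _) (hfM l hl) 2
  rw [cfc_const M A hA] at h1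
  rw [Algebra.algebraMap_eq_smul_one] at h1
  simpa [norm_smul, abs_of_nonneg hM] using h1

lemma aux_mem_range (B : X →L[ℂ] X) (hB : IsSelfAdjoint B) (x : X) (K : ℝ)
    (hK : ∀ z : X, ‖(⟪x, z⟫_ℂ)‖ ≤ K * ‖B z‖) : ∃ u, B u = x := by
  have hadjB : adjoint B = B := by rw [← star_eq_adjoint]; exact hB
  set Bl : X →ₗ[ℂ] X := (B : X →ₗ[ℂ] X) with hBl
  have hker : LinearMap.ker Bl ≤ LinearMap.ker ((innerSL ℂ x).toLinearMap) := by
    intro z hz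
    have hz' : B z = 0 := hz
    have := hK z
    rw [hz', norm_zero, mul_zero] at this
    have h0 : (⟪x, z⟫_ℂ) = 0 := norm_le_zero_iff.mp this
    simpa [LinearMap.mem_ker] using h0
  let fq := (LinearMap.ker Bl).liftQ ((innerSL ℂ x).toLinearMap) hker
  let e := Bl.quotKerEquivRange
  let f : LinearMap.range Bl →ₗ[ℂ] ℂ := fq.comp e.symm.toLinearMap
  have hfv : ∀ z : X, f ⟨Bl z, LinearMap.mem_range_self Bl z⟩ = (⟪x, z⟫_ℂ) := by
    intro z
    have h1 : e.symm ⟨Bl z, LinearMap.mem_range_self Bl z⟩ = (LinearMap.ker Bl).mkQ z :=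
      Bl.quotKerEquivRange_symm_apply_image z (LinearMap.mem_range_self Bl z)
    simp only [f, LinearMap.comp_apply, LinearEquiv.coe_toLinearMap, h1]
    simp [fq]
  have hfb : ∀ v : LinearMap.range Bl, ‖f v‖ ≤ (max K 0) * ‖(v : X)‖ := by
    rintro ⟨v, z, rfl⟩
    have h2 := hfv z
    rw [show (⟨Bl z, LinearMap.mem_range_self Bl z⟩ : LinearMap.range Bl)
        = ⟨Bl z, ⟨z, rfl⟩⟩ from rfl] at h2
    rw [h2]
    calc ‖(⟪x, z⟫_ℂ)‖ ≤ K * ‖B z‖ := hK z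
      _ ≤ (max K 0) * ‖B z‖ := mul_le_mul_of_nonneg_right (le_max_left _ _) (norm_nonneg _)
      _ = (max K 0) * ‖(⟨Bl z, ⟨z, rfl⟩⟩ : LinearMap.range Bl)‖ := rfl
  let fc : LinearMap.range Bl →L[ℂ] ℂ := f.mkContinuous (max K 0) hfb
  obtain ⟨F, hF, -⟩ := exists_extension_norm_eq (LinearMap.range Bl) fc
  set u := (InnerProductSpace.toDual ℂ X).symm F with hu
  refine ⟨u, ?_⟩
  apply ext_inner_right ℂ
  intro z
  have h1 : (⟪B u, z⟫_ℂ) = ⟪u, B z⟫_ℂ := by rw [← hadjB, adjoint_inner_left, hadjB]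
  have h2 : (⟪u, B z⟫_ℂ) = F (B z) := InnerProductSpace.toDual_symm_apply
  have h3 : F (B z) = fc ⟨B z, LinearMap.mem_range_self Bl z⟩ :=
    (hF ⟨B z, LinearMap.mem_range_self Bl z⟩)
  have h4 : fc ⟨B z, LinearMap.mem_range_self Bl z⟩ = (⟪x, z⟫_ℂ) := hfv z
  rw [h1, h2, h3, h4]

end AuxHilbert

section Operators

variable {X Y : Type*} [NormedAddCommGroup X] [InnerProductSpace ℂ X] [CompleteSpace X]
  [NormedAddCommGroup Y] [InnerProductSpace ℂ Y] [CompleteSpace Y]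
set_option maxHeartbeats 1600000 in
/-- Converse result (Theorem 4.2): if `(ρ,s)` is an order-source pair for `{g_α}`
and `‖R_α y - x†‖ = O(ρ(α))` as `α → 0⁺`, then `x† ∈ R(s(T*T))`.
Here `R_α = g_α(T*T)T*` via the continuous functional calculus, and `x† = T†y` is
encoded by the normal equation `T*T x† = T*y` together with `x† ⊥ ker T`. -/
theorem converse_source (G : SRM)
    (hcont : ∀ α ∈ Ioo (0:ℝ) G.α₀, Continuous (G.g α))
    (T : X →L[ℂ] Y) (y : Y) (xdag : X)
    (hnormal : ((ContinuousLinearMap.adjoint T).comp T) xdag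
      = ContinuousLinearMap.adjoint T y)
    (hker : xdag ∈ (LinearMap.ker (T : X →ₗ[ℂ] Y))ᗮ)
    (s ρ : ℝ → ℝ) (hs : memS s) (hρ : memO ρ)
    (hos : orderSourcePair G ρ s)
    (hrate : ∃ c > (0:ℝ), ∀ᶠ α in 𝓝[>] (0:ℝ),
      ‖cfc (G.g α) ((ContinuousLinearMap.adjoint T).comp T)
          (ContinuousLinearMap.adjoint T y) - xdag‖ ≤ c * ρ α) :
    ∃ w : X, cfc s ((ContinuousLinearMap.adjoint T).comp T) w = xdag := by
  classical
  set A : X →L[ℂ] X := (ContinuousLinearMap.adjoint T).comp T with hADef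
  obtain ⟨γ, hγ, hfun, hfunpos, hfun0, hOS⟩ := hos
  obtain ⟨c, hc, hrate⟩ := hrate
  have hA : IsSelfAdjoint A := by
    show star A = A
    rw [ContinuousLinearMap.star_eq_adjoint, hADef, ContinuousLinearMap.adjoint_comp,
      ContinuousLinearMap.adjoint_adjoint]
  have hadjA : ContinuousLinearMap.adjoint A = A := by
    rw [← ContinuousLinearMap.star_eq_adjoint]; exact hA
  have hApos : A.IsPositive := by
    have h1 := (ContinuousLinearMap.isPositive_one (E := Y) (𝕜 := ℂ)).adjoint_conj T
    have h2 : (1 : Y →L[ℂ] Y) ∘L T = T := by ext z; simp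
    rw [h2] at h1
    exact h1
  have hspec : spectrum ℝ A ⊆ Ici 0 := fun l hl =>
    spectrum_nonneg_of_nonneg ((ContinuousLinearMap.nonneg_iff_isPositive A).mpr hApos) hl
  have hIoo : ∀ᶠ α in 𝓝[>] (0:ℝ), α ∈ Ioo (0:ℝ) G.α₀ :=
    Filter.eventually_of_mem (Ioo_mem_nhdsGT G.hα₀) fun _ hx => hx
  have hgcontOn : ∀ α ∈ Ioo (0:ℝ) G.α₀, ContinuousOn (G.g α) (spectrum ℝ A) :=
    fun α hα => (hcont α hα).continuousOn
  have hrcont : ∀ α ∈ Ioo (0:ℝ) G.α₀, Continuous (G.r α) := by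
    intro α hα
    have h1 : G.r α = fun l => 1 - l * G.g α l := rfl
    rw [h1]
    exact continuous_const.sub (continuous_id.mul (hcont α hα))
  -- the residual identity
  have hkey : ∀ α ∈ Ioo (0:ℝ) G.α₀,
      cfc (G.g α) A (ContinuousLinearMap.adjoint T y) - xdag = -(cfc (G.r α) A xdag) := by
    intro α hα
    have e1 : cfc (fun l => G.g α l * l) A = cfc (G.g α) A * A := by
      rw [cfc_mul (G.g α) (fun l : ℝ => l) A (hgcontOn α hα) continuous_id'.continuousOn]
      congr 1
      exact cfc_id ℝ A hA
    have e2 : cfc (G.r α) A = 1 - cfc (fun l => G.g α l * l) A := by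
      have hfn : G.r α = fun l => (fun _ : ℝ => (1:ℝ)) l - (fun l => G.g α l * l) l := by
        funext l
        show 1 - l * G.g α l = 1 - G.g α l * l
        ring
      rw [hfn]
      beta_reduce
      rw [cfc_sub (fun _ : ℝ => (1:ℝ)) (fun l => G.g α l * l) A continuousOn_const
        ((hgcontOn α hα).mul continuous_id'.continuousOn)]
      congr 1
      rw [cfc_const 1 A hA, map_one]
    have e3 : ContinuousLinearMap.adjoint T y = A xdag := hnormal.symm
    have e4 : cfc (G.g α) A (A xdag) = (cfc (G.g α) A * A) xdag := rfl
    rw [e3, e4, ← e1, e2]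
    simp only [ContinuousLinearMap.sub_apply, ContinuousLinearMap.one_apply, neg_sub]
  have hres : ∀ᶠ α in 𝓝[>] (0:ℝ), ‖cfc (G.r α) A xdag‖ ≤ c * ρ α := by
    filter_upwards [hrate, hIoo] with α h1 h2
    calc ‖cfc (G.r α) A xdag‖
        = ‖cfc (G.g α) A (ContinuousLinearMap.adjoint T y) - xdag‖ := by
          rw [hkey α h2, norm_neg]
      _ ≤ c * ρ α := h1
  -- approximation from the closure of the range of A
  have hclos : ∀ ε > (0:ℝ), ∃ v : X, ‖xdag - A v‖ < ε := by
    have horth : (LinearMap.range (A : X →ₗ[ℂ] X))ᗮ = LinearMap.ker (A : X →ₗ[ℂ] X) := by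
      ext z
      constructor
      · intro hz
        have hz' : ∀ v : X, (⟪v, A z⟫_ℂ) = 0 := fun v => by
          have h4 := (Submodule.mem_orthogonal _ z).mp hz (A v) (LinearMap.mem_range_self _ v)
          rwa [← hadjA, ContinuousLinearMap.adjoint_inner_left] at h4
        have h5 : A z = 0 := ext_inner_left ℂ fun v => by rw [hz' v, inner_zero_right]
        exact LinearMap.mem_ker.mpr h5
      · intro hz
        have hz' : A z = 0 := hz
        refine (Submodule.mem_orthogonal _ z).mpr fun u hu => ?_
        obtain ⟨v, rfl⟩ := hu
        show (⟪A v, z⟫_ℂ) = 0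
        rw [← hadjA, ContinuousLinearMap.adjoint_inner_left, hz', inner_zero_right]
    have hkerAT : LinearMap.ker (A : X →ₗ[ℂ] X) = LinearMap.ker (T : X →ₗ[ℂ] Y) := by
      ext z
      constructor
      · intro hz
        have hz' : A z = 0 := hz
        have h5 : (⟪T z, T z⟫_ℂ) = 0 := by
          have h6 : (⟪A z, z⟫_ℂ) = ⟪T z, T z⟫_ℂ := by
            rw [show A z = ContinuousLinearMap.adjoint T (T z) from rfl,
              ContinuousLinearMap.adjoint_inner_left]
          rw [← h6, hz', inner_zero_left]
        exact LinearMap.mem_ker.mpr (inner_self_eq_zero.mp h5)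
      · intro hz
        have hz' : T z = 0 := hz
        refine LinearMap.mem_ker.mpr ?_
        show ContinuousLinearMap.adjoint T (T z) = 0
        rw [hz', map_zero]
    have hmem : xdag ∈ (LinearMap.range (A : X →ₗ[ℂ] X)).topologicalClosure := by
      rw [← Submodule.orthogonal_orthogonal_eq_closure, horth, hkerAT]
      exact hker
    intro ε hε
    have hmem2 : xdag ∈ closure ((LinearMap.range (A : X →ₗ[ℂ] X) : Submodule ℂ X) : Set X) := hmem
    obtain ⟨u, hu, hd⟩ := Metric.mem_closure_iff.mp hmem2 ε hε
    obtain ⟨v, rfl⟩ := hu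
    exact ⟨v, by rw [← dist_eq_norm]; exact hd⟩
  -- the approximate preimages
  set q : ℝ → ℝ → ℝ := fun α l => (G.g α l * l) * (cutoff (hfun α) l / s l) with hqDef
  set w : ℝ → X := fun α => cfc (q α) A xdag with hwDef
  set B : X →L[ℂ] X := cfc s A with hBDef
  have hBsa : IsSelfAdjoint B := cfc_predicate s A
  have hadjB : ContinuousLinearMap.adjoint B = B := by
    rw [← ContinuousLinearMap.star_eq_adjoint]; exact hBsa
  have hscontS : ContinuousOn s (spectrum ℝ A) := hs.1.mono hspec
  have hqcont : ∀ α ∈ Ioo (0:ℝ) G.α₀, ContinuousOn (q α) (spectrum ℝ A) := by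
    intro α hα
    have h1 : ContinuousOn (fun l => (G.g α l * l) * (cutoff (hfun α) l / s l)) (Ici 0) :=
      ((hcont α hα).mul continuous_id).continuousOn.mul
        (cutoff_div_continuousOn hs (hfunpos α hα))
    exact h1.mono hspec
  -- uniform bound on w
  have hwbound : ∀ᶠ α in 𝓝[>] (0:ℝ), ‖w α‖ ≤ G.C * c / γ := by
    filter_upwards [hres, hIoo] with α h1 h2
    have hρα : 0 < ρ α := hρ.1 α h2.1
    set k : ℝ := G.C / (γ * ρ α) with hk
    have hk0 : 0 ≤ k := by
      apply div_nonneg G.hC.le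
      positivity
    have hsq : ∀ l ∈ spectrum ℝ A, (q α l) ^ 2 ≤ (k * G.r α l) ^ 2 := by
      intro l hl
      have hl0 : (0:ℝ) ≤ l := hspec hl
      by_cases hcz : cutoff (hfun α) l = 0
      · have hq0 : q α l = 0 := by
          show (G.g α l * l) * (cutoff (hfun α) l / s l) = 0
          rw [hcz, zero_div, mul_zero]
        rw [hq0]
        simpa using sq_nonneg (k * G.r α l)
      · have hlh : hfun α ≤ l := by
          by_contra hlt
          push_neg at hlt
          exact hcz (cutoff_eq_zero (hfunpos α h2) hlt.le)
        have hlpos : 0 < l := lt_of_lt_of_le (hfunpos α h2) hlh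
        have hspos : 0 < s l := hs.2.2.2 l hlpos
        have hOS' : γ ≤ s l * |G.r α l| / ρ α := hOS α h2 l hlh
        have h5 : γ * ρ α ≤ s l * |G.r α l| := by
          rw [le_div_iff₀ hρα] at hOS'
          linarith
        have hCl : |G.g α l * l| ≤ G.C := by rw [mul_comm]; exact G.bound α h2 l hl0
        have hdivnn : (0:ℝ) ≤ cutoff (hfun α) l / s l :=
          div_nonneg (cutoff_nonneg _ _) hspos.le
        have habs : |q α l| ≤ k * |G.r α l| := by
          have hq1 : |q α l| = |G.g α l * l| * (cutoff (hfun α) l / s l) := by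
            show |(G.g α l * l) * (cutoff (hfun α) l / s l)| = _
            rw [abs_mul, abs_of_nonneg hdivnn]
          rw [hq1]
          calc |G.g α l * l| * (cutoff (hfun α) l / s l)
              ≤ G.C * (cutoff (hfun α) l / s l) := mul_le_mul_of_nonneg_right hCl hdivnn
            _ ≤ G.C * (|G.r α l| / (γ * ρ α)) := by
                refine mul_le_mul_of_nonneg_left ?_ G.hC.le
                rw [div_le_div_iff₀ hspos (by positivity)]
                calc cutoff (hfun α) l * (γ * ρ α) ≤ 1 * (γ * ρ α) :=
                      mul_le_mul_of_nonneg_right (cutoff_le_one _ _) (by positivity)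
                  _ ≤ |G.r α l| * s l := by rw [one_mul]; linarith [h5]
            _ = k * |G.r α l| := by rw [hk]; ring
        calc (q α l) ^ 2 = |q α l| ^ 2 := (sq_abs _).symm
          _ ≤ (k * |G.r α l|) ^ 2 := pow_le_pow_left₀ (abs_nonneg _) habs 2
          _ = (k * G.r α l) ^ 2 := by rw [mul_pow, mul_pow, sq_abs]
    have hb := aux_norm_le A (q α) (fun l => k * G.r α l) (hqcont α h2)
      (continuous_const.mul (hrcont α h2)).continuousOn hsq xdag
    rw [cfc_const_mul k (G.r α) A (hrcont α h2).continuousOn] at hb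
    rw [ContinuousLinearMap.smul_apply, norm_smul, Real.norm_eq_abs, abs_of_nonneg hk0] at hb
    have hfin : k * (c * ρ α) = G.C * c / γ := by
      rw [hk]
      field_simp
    calc ‖w α‖ ≤ k * ‖cfc (G.r α) A xdag‖ := hb
      _ ≤ k * (c * ρ α) := mul_le_mul_of_nonneg_left h1 hk0
      _ = G.C * c / γ := hfin
  -- B (w α) converges to xdag
  have hsmall : ∀ ε > (0:ℝ), ∀ᶠ α in 𝓝[>] (0:ℝ), ‖B (w α) - xdag‖ ≤ ε := by
    intro ε hε
    obtain ⟨v, hv⟩ := hclos (ε/3) (by positivity)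
    have hev1 : ∀ᶠ α in 𝓝[>] (0:ℝ), c * ρ α ≤ ε/3 := by
      have h6 : ∀ᶠ α in 𝓝[>] (0:ℝ), ρ α < ε/(3*c) :=
        hρ.2.2.eventually_lt_const (by positivity)
      filter_upwards [h6] with α h7
      rw [show ε/3 = c * (ε/(3*c)) from by field_simp]
      exact mul_le_mul_of_nonneg_left h7.le hc.le
    have hev2 : ∀ᶠ α in 𝓝[>] (0:ℝ), 2 * hfun α * ‖v‖ ≤ ε/3 := by
      have h6 : ∀ᶠ α in 𝓝[>] (0:ℝ), hfun α < ε/(6*(‖v‖+1)) :=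
        hfun0.eventually_lt_const (by positivity)
      filter_upwards [h6, hIoo] with α h7 h8
      have h9 : 0 < hfun α := hfunpos α h8
      have h11 : 2 * hfun α * (‖v‖+1) < 2 * (ε/(6*(‖v‖+1))) * (‖v‖+1) := by
        apply mul_lt_mul_of_pos_right (by linarith) (by positivity)
      have h12 : 2 * (ε/(6*(‖v‖+1))) * (‖v‖+1) = ε/3 := by
        have hne : (‖v‖:ℝ) + 1 ≠ 0 := by positivity
        field_simp
        ring
      have h13 : 2 * hfun α * ‖v‖ = 2 * hfun α * (‖v‖+1) - 2 * hfun α := by ring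
      linarith
    filter_upwards [hres, hev1, hev2, hIoo] with α h1 he1 he2 h2
    have hαpos : 0 < hfun α := hfunpos α h2
    have hcut1 : Continuous (fun l => cutoff (hfun α) l - 1) :=
      (cutoff_continuous _).sub continuous_const
    have hcutr : Continuous (fun l => G.r α l * cutoff (hfun α) l) :=
      (hrcont α h2).mul (cutoff_continuous _)
    -- identify B (w α)
    have hBw : B (w α) = cfc (fun l => (G.g α l * l) * cutoff (hfun α) l) A xdag := by
      have e5 : B (w α) = (cfc s A * cfc (q α) A) xdag := rfl
      rw [e5, ← cfc_mul s (q α) A hscontS (hqcont α h2)]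
      congr 1
      apply cfc_congr
      intro l hl
      have hl0 : (0:ℝ) ≤ l := hspec hl
      show s l * q α l = (G.g α l * l) * cutoff (hfun α) l
      rcases eq_or_lt_of_le hl0 with hl1 | hl1
      · show s l * ((G.g α l * l) * (cutoff (hfun α) l / s l))
          = (G.g α l * l) * cutoff (hfun α) l
        rw [← hl1, hs.2.1]
        simp
      · have hsne : s l ≠ 0 := ne_of_gt (hs.2.2.2 l hl1)
        show s l * ((G.g α l * l) * (cutoff (hfun α) l / s l))
          = (G.g α l * l) * cutoff (hfun α) l
        field_simp
    -- decomposition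
    have hdec : B (w α) - xdag = cfc (fun l => cutoff (hfun α) l - 1) A xdag
        - cfc (fun l => G.r α l * cutoff (hfun α) l) A xdag := by
      rw [hBw]
      have e7 : (fun l => (G.g α l * l) * cutoff (hfun α) l)
          = fun l => (fun _ : ℝ => (1:ℝ)) l + ((fun l => cutoff (hfun α) l - 1) l
            - (fun l => G.r α l * cutoff (hfun α) l) l) := by
        funext l
        show (G.g α l * l) * cutoff (hfun α) l
          = 1 + ((cutoff (hfun α) l - 1) - (1 - l * G.g α l) * cutoff (hfun α) l)
        ring
      rw [e7]
      beta_reduce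
      rw [cfc_add (a := A) (fun _ : ℝ => (1:ℝ))
        (fun l => (cutoff (hfun α) l - 1) - G.r α l * cutoff (hfun α) l) continuousOn_const
        (hcut1.continuousOn.sub hcutr.continuousOn),
        cfc_sub (fun l => cutoff (hfun α) l - 1) (fun l => G.r α l * cutoff (hfun α) l) A
          hcut1.continuousOn hcutr.continuousOn,
        cfc_const 1 A hA, map_one]
      simp only [ContinuousLinearMap.add_apply, ContinuousLinearMap.sub_apply,
        ContinuousLinearMap.one_apply]
      abel
    -- second term bound
    have hn2 : ‖cfc (fun l => G.r α l * cutoff (hfun α) l) A xdag‖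
        ≤ ‖cfc (G.r α) A xdag‖ := by
      apply aux_norm_le A _ _ hcutr.continuousOn (hrcont α h2).continuousOn _ xdag
      intro l hl
      have hc0 := cutoff_nonneg (hfun α) l
      have hc1 := cutoff_le_one (hfun α) l
      have hmain : 0 ≤ (G.r α l)^2 * ((1 - cutoff (hfun α) l) * (1 + cutoff (hfun α) l)) :=
        mul_nonneg (sq_nonneg _) (mul_nonneg (by linarith) (by linarith))
      nlinarith [hmain]
    -- first term bound
    have hsplit : cfc (fun l => cutoff (hfun α) l - 1) A xdag
        = cfc (fun l => cutoff (hfun α) l - 1) A (xdag - A v)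
          + cfc (fun l => cutoff (hfun α) l - 1) A (A v) := by
      rw [← map_add]
      congr 1
      abel
    have b1 : ‖cfc (fun l => cutoff (hfun α) l - 1) A (xdag - A v)‖ ≤ 1 * ‖xdag - A v‖ := by
      apply aux_norm_le_const A hA _ hcut1.continuousOn 1 zero_le_one _ _
      intro l hl
      have hc0 := cutoff_nonneg (hfun α) l
      have hc1 := cutoff_le_one (hfun α) l
      rw [abs_le]
      constructor <;> linarith
    have b2 : ‖cfc (fun l => cutoff (hfun α) l - 1) A (A v)‖ ≤ (2 * hfun α) * ‖v‖ := by
      have e8 : cfc (fun l => cutoff (hfun α) l - 1) A (A v)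
          = cfc (fun l => (cutoff (hfun α) l - 1) * l) A v := by
        have e9 : A v = cfc (fun l : ℝ => l) A v := by rw [cfc_id' ℝ A hA]
        rw [e9]
        have e10 : cfc (fun l => cutoff (hfun α) l - 1) A (cfc (fun l : ℝ => l) A v)
            = (cfc (fun l => cutoff (hfun α) l - 1) A * cfc (fun l : ℝ => l) A) v := rfl
        rw [e10, ← cfc_mul (fun l => cutoff (hfun α) l - 1) (fun l : ℝ => l) A hcut1.continuousOn continuous_id'.continuousOn]
      rw [e8]
      apply aux_norm_le_const A hA _ (hcut1.mul continuous_id).continuousOn (2 * hfun α)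
        (by positivity) _ v
      intro l hl
      exact cutoff_abs hαpos (hspec hl)
    have hn1 : ‖cfc (fun l => cutoff (hfun α) l - 1) A xdag‖ ≤ ε/3 + (2 * hfun α) * ‖v‖ := by
      rw [hsplit]
      calc ‖_ + _‖ ≤ ‖cfc (fun l => cutoff (hfun α) l - 1) A (xdag - A v)‖
            + ‖cfc (fun l => cutoff (hfun α) l - 1) A (A v)‖ := norm_add_le _ _
        _ ≤ 1 * ‖xdag - A v‖ + (2 * hfun α) * ‖v‖ := add_le_add b1 b2
        _ ≤ ε/3 + (2 * hfun α) * ‖v‖ := by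
            rw [one_mul]
            exact add_le_add_left hv.le _
    calc ‖B (w α) - xdag‖
        = ‖cfc (fun l => cutoff (hfun α) l - 1) A xdag
          - cfc (fun l => G.r α l * cutoff (hfun α) l) A xdag‖ := by rw [hdec]
      _ ≤ ‖cfc (fun l => cutoff (hfun α) l - 1) A xdag‖
          + ‖cfc (fun l => G.r α l * cutoff (hfun α) l) A xdag‖ := norm_sub_le _ _
      _ ≤ (ε/3 + (2 * hfun α) * ‖v‖) + c * ρ α := add_le_add hn1 (hn2.trans h1)
      _ ≤ ε := by linarith
  -- the final inequality and conclusion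
  set K : ℝ := G.C * c / γ with hKDef
  have hfinal : ∀ z : X, ‖(⟪xdag, z⟫_ℂ)‖ ≤ K * ‖B z‖ := by
    intro z
    by_contra hcon
    push_neg at hcon
    set δ : ℝ := ‖(⟪xdag, z⟫_ℂ)‖ - K * ‖B z‖ with hδ
    have hδpos : 0 < δ := by rw [hδ]; linarith
    obtain ⟨α, hα1, hα2⟩ := ((hsmall (δ/(2*(‖z‖+1))) (by positivity)).and hwbound).exists
    have key : ‖(⟪xdag, z⟫_ℂ)‖ ≤ (δ/(2*(‖z‖+1))) * ‖z‖ + K * ‖B z‖ := by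
      have e10 : (⟪xdag, z⟫_ℂ) = ⟪xdag - B (w α), z⟫_ℂ + ⟪B (w α), z⟫_ℂ := by
        rw [inner_sub_left]
        ring
      rw [e10]
      have b3 : ‖(⟪xdag - B (w α), z⟫_ℂ)‖ ≤ (δ/(2*(‖z‖+1))) * ‖z‖ := by
        calc ‖(⟪xdag - B (w α), z⟫_ℂ)‖ ≤ ‖xdag - B (w α)‖ * ‖z‖ := norm_inner_le_norm _ _
          _ ≤ (δ/(2*(‖z‖+1))) * ‖z‖ := by
              refine mul_le_mul_of_nonneg_right ?_ (norm_nonneg z)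
              rw [norm_sub_rev]
              exact hα1
      have b4 : ‖(⟪B (w α), z⟫_ℂ)‖ ≤ K * ‖B z‖ := by
        have e11 : (⟪B (w α), z⟫_ℂ) = ⟪w α, B z⟫_ℂ := by
          rw [← hadjB, ContinuousLinearMap.adjoint_inner_left, hadjB]
        rw [e11]
        calc ‖(⟪w α, B z⟫_ℂ)‖ ≤ ‖w α‖ * ‖B z‖ := norm_inner_le_norm _ _
          _ ≤ K * ‖B z‖ := mul_le_mul_of_nonneg_right hα2 (norm_nonneg _)
      calc ‖(⟪xdag - B (w α), z⟫_ℂ) + ⟪B (w α), z⟫_ℂ‖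
          ≤ ‖(⟪xdag - B (w α), z⟫_ℂ)‖ + ‖(⟪B (w α), z⟫_ℂ)‖ := norm_add_le _ _
        _ ≤ (δ/(2*(‖z‖+1))) * ‖z‖ + K * ‖B z‖ := add_le_add b3 b4
    have hz1 : (δ/(2*(‖z‖+1))) * ‖z‖ < δ := by
      rw [div_mul_eq_mul_div, div_lt_iff₀ (by positivity)]
      nlinarith [norm_nonneg z]
    have : ‖(⟪xdag, z⟫_ℂ)‖ < ‖(⟪xdag, z⟫_ℂ)‖ := by
      calc ‖(⟪xdag, z⟫_ℂ)‖ ≤ (δ/(2*(‖z‖+1))) * ‖z‖ + K * ‖B z‖ := key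
        _ < δ + K * ‖B z‖ := by linarith
        _ = ‖(⟪xdag, z⟫_ℂ)‖ := by rw [hδ]; ring
    exact absurd this (lt_irrefl _)
  obtain ⟨u, hu⟩ := aux_mem_range B hBsa xdag K hfinal
  exact ⟨u, hu⟩

end Operators
end
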